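/- arXiv:2508.14103 — 5 statements merged into one kernel-verified Lean document; each statement's English description precedes it below -/
import Mathlib

section
/- Let Σ be an acyclic partial matching on a finite simplicial complex K compatible with a cosheaf C (i.e., C_{τ▷σ} is an isomorphism for each matched pair σ◁τ). Then the Morse boundary maps, given blockwise between critical simplices α ∈ K_k and ω ∈ K_{k−1} by [α:ω]_Σ := [α:ω]·C_{α▷ω} + Σ_ρ [τ:ω]·C_{τ▷ω} ∘ ω_ρ ∘ C_{α▷σ}·[α:σ] (sum over Σ-paths ρ from a facet σ of α to τ with ω a facet of τ), satisfy ∂^Σ_k ∘ ∂^Σ_{k+1} = 0, so the Morse complex C^Σ_•(K;C) = ⊕_{α critical} C_α is a chain complex. -/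
open Classical DirectSum

noncomputable section

/-- A finite (abstract) simplicial complex on a linearly ordered vertex type `V`:
a downward-closed finite collection of nonempty finite vertex sets. -/
structure SimpComplex (V : Type) [LinearOrder V] where
  simplices : Finset (Finset V)
  nonempty_mem : ∀ s ∈ simplices, s.Nonempty
  down_closed : ∀ s ∈ simplices, ∀ t : Finset V, t.Nonempty → t ⊆ s → t ∈ simplices

variable {V : Type} [Fintype V] [LinearOrder V]

/-- The incidence symbol `[σ:τ]`: `(-1)^i` if `τ` is the `i`-th face of `σ`
(i.e. obtained by deleting the `i`-th vertex of `σ` in the linear order), and `0` otherwise. -/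
def incidence (F : Type) [Field F] (σ τ : Finset V) : F :=
  if τ ⊆ σ ∧ σ.card = τ.card + 1 then
    ∑ v ∈ σ \ τ, (-1 : F) ^ (σ.filter (fun w => w < v)).card
  else 0

/-- A cosheaf of finite-dimensional `F`-vector spaces on the poset of finite
subsets of `V` (in particular on any simplicial complex with vertices in `V`):
costalks together with extension maps, functorially. -/
structure Cosheaf (F : Type) [Field F] (V : Type) [LinearOrder V] where
  stalk : Finset V → Type
  [instAdd : ∀ σ, AddCommGroup (stalk σ)]
  [instMod : ∀ σ, Module F (stalk σ)]
  [instFD : ∀ σ, FiniteDimensional F (stalk σ)]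
  ext : ∀ σ τ : Finset V, τ ⊆ σ → (stalk σ →ₗ[F] stalk τ)
  ext_id : ∀ σ, ext σ σ (subset_refl σ) = LinearMap.id
  ext_comp : ∀ σ τ υ (h1 : τ ⊆ σ) (h2 : υ ⊆ τ),
    (ext τ υ h2).comp (ext σ τ h1) = ext σ υ (h2.trans h1)

attribute [instance] Cosheaf.instAdd Cosheaf.instMod Cosheaf.instFD

variable {F : Type} [Field F]

/-- The extension map `C_{σ ≥ τ}`, extended by zero to all pairs. -/
def Cosheaf.extMap (C : Cosheaf F V) (σ τ : Finset V) : C.stalk σ →ₗ[F] C.stalk τ :=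
  if h : τ ⊆ σ then C.ext σ τ h else 0

/-- The `k`-simplices of `K` (as a type). -/
abbrev SimpComplex.Kk (K : SimpComplex V) (k : ℕ) : Type :=
  {σ : Finset V // σ ∈ K.simplices ∧ σ.card = k + 1}

noncomputable instance (K : SimpComplex V) (k : ℕ) : Fintype (K.Kk k) :=
  Fintype.ofFinite _

instance (K : SimpComplex V) (k : ℕ) : DecidableEq (K.Kk k) :=
  Subtype.instDecidableEq

/-- The chain group `C_k(K;𝒞) = ⊕_{σ ∈ K_k} 𝒞_σ`. -/
abbrev Chain (C : Cosheaf F V) (K : SimpComplex V) (k : ℕ) : Type :=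
  ⨁ σ : K.Kk k, C.stalk σ.1

/-- The boundary map `∂ : C_{k+1}(K;𝒞) → C_k(K;𝒞)`, given on the summand of
`σ` by `∑_τ [σ:τ] · C_{σ ≥ τ}`. -/
def boundary (C : Cosheaf F V) (K : SimpComplex V) (k : ℕ) :
    Chain C K (k + 1) →ₗ[F] Chain C K k :=
  DirectSum.toModule F _ _ fun σ =>
    ∑ τ : K.Kk k, incidence F σ.1 τ.1 •
      ((DirectSum.lof F (K.Kk k) (fun τ' => C.stalk τ'.1) τ).comp (C.extMap σ.1 τ.1))

/-- Cycles in degree `n`. -/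
def cyclesC (C : Cosheaf F V) (K : SimpComplex V) : (n : ℕ) → Submodule F (Chain C K n)
  | 0 => ⊤
  | (n + 1) => LinearMap.ker (boundary C K n)

/-- Cosheaf homology `H_n(K;𝒞)`. -/
abbrev homologyC (C : Cosheaf F V) (K : SimpComplex V) (n : ℕ) : Type :=
  (cyclesC C K n) ⧸ (LinearMap.range (boundary C K n)).comap (cyclesC C K n).subtype

end

noncomputable section

variable {V : Type} [Fintype V] [LinearOrder V] {F : Type} [Field F]

/-- `L` is a subcomplex of `K`. -/
def SimpComplex.Sub (L K : SimpComplex V) : Prop := L.simplices ⊆ K.simplices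

/-- The chain map `C_•(L;𝒞|_L) → C_•(K;𝒞)` induced by a subcomplex inclusion
`L ⊆ K`: in each degree, the inclusion of the direct summand `⊕_{σ ∈ L_k} 𝒞_σ`
into `⊕_{σ ∈ K_k} 𝒞_σ`. -/
def inclChain (C : Cosheaf F V) {L K : SimpComplex V} (h : L.Sub K) (k : ℕ) :
    Chain C L k →ₗ[F] Chain C K k :=
  DirectSum.toModule F _ _ fun σ =>
    DirectSum.lof F (K.Kk k) (fun τ => C.stalk τ.1) ⟨σ.1, ⟨h σ.2.1, σ.2.2⟩⟩


/-- A partial matching on a finite simplicial complex `K`: a set of facet pairs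
`(σ ◁ τ)` of simplices of `K` whose constituents are pairwise distinct. -/
structure Matching (K : SimpComplex V) where
  pairs : Finset (Finset V × Finset V)
  mem_fst : ∀ p ∈ pairs, p.1 ∈ K.simplices
  mem_snd : ∀ p ∈ pairs, p.2 ∈ K.simplices
  facet : ∀ p ∈ pairs, p.1 ⊆ p.2 ∧ p.2.card = p.1.card + 1
  pairwise_distinct : ∀ p ∈ pairs, ∀ q ∈ pairs, p ≠ q →
    p.1 ≠ q.1 ∧ p.1 ≠ q.2 ∧ p.2 ≠ q.1 ∧ p.2 ≠ q.2

/-- A simplex is `Σ`-critical if it appears in no matched pair. -/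
def Matching.Critical {K : SimpComplex V} (S : Matching K) (σ : Finset V) : Prop :=
  ∀ p ∈ S.pairs, σ ≠ p.1 ∧ σ ≠ p.2

/-- `IsSigmaPath S l` : the nonempty list `l = [(σ₁,τ₁),…,(σₘ,τₘ)]` of matched
pairs is a `Σ`-path, i.e. a zig-zag `σ₁ ◁ τ₁ ▷ σ₂ ◁ τ₂ ▷ ⋯ ◁ τₘ` in which each
`σ_{i+1}` is a facet of `τ_i` distinct from `σ_i`. -/
def IsSigmaPath {K : SimpComplex V} (S : Matching K)
    (l : List (Finset V × Finset V)) : Prop :=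
  l ≠ [] ∧ (∀ p ∈ l, p ∈ S.pairs) ∧
    l.Chain' (fun p q => q.1 ⊆ p.2 ∧ p.2.card = q.1.card + 1 ∧ q.1 ≠ p.1)

/-- A partial matching is acyclic if every `Σ`-path of length `> 1` is gradient:
its initial simplex `σ₁` is not a face of its final simplex `τₘ`. -/
def Matching.Acyclic {K : SimpComplex V} (S : Matching K) : Prop :=
  ∀ l, IsSigmaPath S l → ∀ h : l ≠ [], 1 < l.length →
    ¬ (l.head h).1 ⊆ (l.getLast h).2

/-- A matching is compatible with the cosheaf `𝒞` if each matched extension map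
`C_{τ ▷ σ}` is an isomorphism. -/
def Matching.Compatible {K : SimpComplex V} (S : Matching K) (C : Cosheaf F V) : Prop :=
  ∀ p ∈ S.pairs, Function.Bijective (C.extMap p.2 p.1)

/-- The formal inverse `C⁻¹_{τ ▷ σ} : 𝒞_σ → 𝒞_τ` of an invertible extension map
(zero if the extension map is not invertible). -/
def Cosheaf.invExt (C : Cosheaf F V) (τ σ : Finset V) : C.stalk σ →ₗ[F] C.stalk τ :=
  if h : Function.Bijective (C.extMap τ σ) then
    ((LinearEquiv.ofBijective (C.extMap τ σ) h).symm : C.stalk σ →ₗ[F] C.stalk τ)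
  else 0

/-- The (unsigned) `𝒞`-weight of a `Σ`-path `[(σ₁,τ₁),…,(σₘ,τₘ)]`:
`C⁻¹_{τₘ▷σₘ} ∘ C_{τₘ₋₁▷σₘ} ∘ ⋯ ∘ C_{τ₁▷σ₂} ∘ C⁻¹_{τ₁▷σ₁} : 𝒞_{σ₁} → 𝒞_{τₘ}`. -/
def pathWeight (C : Cosheaf F V) :
    (l : List (Finset V × Finset V)) → (h : l ≠ []) →
      (C.stalk (l.head h).1 →ₗ[F] C.stalk (l.getLast h).2)
  | [p], _ => C.invExt p.2 p.1
  | p :: q :: l, _ =>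
    (pathWeight C (q :: l) (by simp)).comp ((C.extMap p.2 q.1).comp (C.invExt p.2 p.1))

/-- The sign `(-1)^m · ∏[τᵢ:σᵢ] · ∏[τᵢ:σᵢ₊₁]` of a `Σ`-path. -/
def pathSign (F : Type) [Field F] {V : Type} [Fintype V] [LinearOrder V] :
    List (Finset V × Finset V) → F
  | [] => 1
  | [p] => - incidence F p.2 p.1
  | p :: q :: l => (- incidence F p.2 p.1) * incidence F p.2 q.1 * pathSign F (q :: l)

noncomputable instance : Fintype {l : List (Finset V × Finset V) // l.Nodup} := by
  infer_instance

/-- The Morse boundary block `[α:ω]_Σ : 𝒞_α → 𝒞_ω`, namely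
`[α:ω]·C_{α▷ω} + ∑_ρ [τ:ω]·C_{τ▷ω} ∘ ω_ρ ∘ C_{α▷σ}·[α:σ]`, the sum being over
`Σ`-paths `ρ` from `σ` to `τ` (incidence numbers kill all terms where `σ` is not
a facet of `α` or `ω` is not a facet of `τ`; by acyclicity a `Σ`-path never
repeats a pair, so the sum may be taken over duplicate-free lists). -/
noncomputable def morseBlock {K : SimpComplex V} (C : Cosheaf F V) (S : Matching K)
    (α ω : Finset V) : C.stalk α →ₗ[F] C.stalk ω :=
  incidence F α ω • C.extMap α ω +
    ∑ ρ : {l : List (Finset V × Finset V) // l.Nodup},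
      if h : IsSigmaPath S ρ.1 then
        (pathSign F ρ.1 * incidence F α (ρ.1.head h.1).1 *
            incidence F (ρ.1.getLast h.1).2 ω) •
          ((C.extMap (ρ.1.getLast h.1).2 ω).comp
            ((pathWeight C ρ.1 h.1).comp (C.extMap α (ρ.1.head h.1).1)))
      else 0

/-- The `Σ`-critical `k`-simplices of `K`. -/
abbrev critIdx {K : SimpComplex V} (S : Matching K) (k : ℕ) : Type :=
  {σ : Finset V // (σ ∈ K.simplices ∧ σ.card = k + 1) ∧ S.Critical σ}

noncomputable instance {K : SimpComplex V} (S : Matching K) (k : ℕ) :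
    Fintype (critIdx S k) := Fintype.ofFinite _

/-- The Morse chain group `C^Σ_k(K;𝒞) = ⊕_{α critical} 𝒞_α`. -/
abbrev MorseChain {K : SimpComplex V} (C : Cosheaf F V) (S : Matching K) (k : ℕ) :
    Type :=
  ⨁ σ : critIdx S k, C.stalk σ.1

/-- The Morse boundary map, given blockwise by `[α:ω]_Σ`. -/
noncomputable def morseBoundary {K : SimpComplex V} (C : Cosheaf F V) (S : Matching K)
    (k : ℕ) : MorseChain C S (k + 1) →ₗ[F] MorseChain C S k :=
  DirectSum.toModule F _ _ fun α =>
    ∑ ω : critIdx S k,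
      (DirectSum.lof F (critIdx S k) (fun ω' => C.stalk ω'.1) ω).comp
        (morseBlock C S α.1 ω.1)

/-- Morse cycles in degree `n`. -/
noncomputable def morseCycles {K : SimpComplex V} (C : Cosheaf F V) (S : Matching K) :
    (n : ℕ) → Submodule F (MorseChain C S n)
  | 0 => ⊤
  | (n + 1) => LinearMap.ker (morseBoundary C S n)

/-- Morse homology in degree `n`. -/
noncomputable abbrev morseHomology {K : SimpComplex V} (C : Cosheaf F V)
    (S : Matching K) (n : ℕ) : Type :=
  (morseCycles C S n) ⧸
    (LinearMap.range (morseBoundary C S n)).comap (morseCycles C S n).subtype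


namespace MorseDev
set_option linter.unusedSectionVars false

variable (C : Cosheaf F V)

abbrev Big : Type := ⨁ σ : Finset V, C.stalk σ

def glob (B : ∀ α ω : Finset V, C.stalk α →ₗ[F] C.stalk ω) : Module.End F (Big C) :=
  DirectSum.toModule F _ _ fun α => ∑ ω : Finset V, (lof F (Finset V) (fun σ => C.stalk σ) ω).comp (B α ω)

def proj (p : Finset V → Prop) : Module.End F (Big C) :=
  DirectSum.toModule F _ _ fun α => if p α then lof F (Finset V) (fun σ => C.stalk σ) α else 0

def blk (f : Module.End F (Big C)) (α ω : Finset V) : C.stalk α →ₗ[F] C.stalk ω :=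
  (DirectSum.component F (Finset V) _ ω).comp (f.comp (lof F (Finset V) (fun σ => C.stalk σ) α))

variable {C}

lemma glob_lof_apply (B : ∀ α ω : Finset V, C.stalk α →ₗ[F] C.stalk ω) (α : Finset V) (x : C.stalk α) :
    glob C B (lof F (Finset V) (fun σ => C.stalk σ) α x) =
      ∑ ω : Finset V, lof F (Finset V) (fun σ => C.stalk σ) ω (B α ω x) := by
  simp [glob, DirectSum.toModule_lof, LinearMap.sum_apply]

lemma proj_lof_apply (p : Finset V → Prop) (α : Finset V) (x : C.stalk α) :
    proj C p (lof F (Finset V) (fun σ => C.stalk σ) α x) =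
      if p α then lof F (Finset V) (fun σ => C.stalk σ) α x else 0 := by
  simp only [proj, DirectSum.toModule_lof]
  split <;> simp

lemma component_lof (α ω : Finset V) (x : C.stalk α) :
    DirectSum.component F (Finset V) (fun σ => C.stalk σ) ω
      (lof F (Finset V) (fun σ => C.stalk σ) α x) =
      if h : α = ω then h ▸ x else 0 := by
  rw [DirectSum.component.of]

lemma blk_glob (B : ∀ α ω : Finset V, C.stalk α →ₗ[F] C.stalk ω) (α ω : Finset V) :
    blk C (glob C B) α ω = B α ω := by
  ext x
  simp only [blk, LinearMap.comp_apply, glob_lof_apply, map_sum]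
  rw [Finset.sum_eq_single ω]
  · rw [component_lof]; simp
  · intro β _ hβ
    rw [component_lof]; simp [hβ]
  · simp

lemma decomp (y : Big C) :
    ∑ ω : Finset V, lof F (Finset V) (fun σ => C.stalk σ) ω
      (DirectSum.component F (Finset V) (fun σ => C.stalk σ) ω y) = y := by
  exact DirectSum.sum_univ_of y

lemma blk_mul (f g : Module.End F (Big C)) (α γ : Finset V) :
    blk C (f * g) α γ = ∑ β : Finset V, (blk C f β γ).comp (blk C g α β) := by
  ext x
  simp only [blk, LinearMap.comp_apply, LinearMap.sum_apply, Module.End.mul_apply]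
  conv_lhs => rw [← decomp (g (lof F (Finset V) (fun σ => C.stalk σ) α x))]
  rw [map_sum, map_sum]

lemma ext_blk {f g : Module.End F (Big C)} (h : ∀ α ω, blk C f α ω = blk C g α ω) : f = g := by
  apply DirectSum.linearMap_ext
  intro α
  ext x : 1
  have h1 : f (lof F (Finset V) (fun σ => C.stalk σ) α x)
      = g (lof F (Finset V) (fun σ => C.stalk σ) α x) := by
    rw [← decomp (f _), ← decomp (g _)]
    refine Finset.sum_congr rfl fun ω _ => ?_
    have h2 := congrArg (fun (m : C.stalk α →ₗ[F] C.stalk ω) => m x) (h α ω)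
    simp only [blk, LinearMap.comp_apply] at h2
    rw [h2]
  simpa using h1

lemma blk_add (f g : Module.End F (Big C)) (α ω : Finset V) :
    blk C (f + g) α ω = blk C f α ω + blk C g α ω := by
  ext x; simp [blk]

lemma blk_sum {ι : Type*} (s : Finset ι) (f : ι → Module.End F (Big C)) (α ω : Finset V) :
    blk C (∑ i ∈ s, f i) α ω = ∑ i ∈ s, blk C (f i) α ω := by
  ext x; simp [blk]

lemma blk_zero (α ω : Finset V) : blk C (0 : Module.End F (Big C)) α ω = 0 := by
  ext x; simp [blk]

lemma blk_mul_proj (f : Module.End F (Big C)) (p : Finset V → Prop) (α γ : Finset V) :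
    blk C (f * proj C p) α γ = if p α then blk C f α γ else 0 := by
  ext x
  simp only [blk, LinearMap.comp_apply, Module.End.mul_apply, proj_lof_apply]
  split
  · rfl
  · simp

lemma blk_proj_mul (f : Module.End F (Big C)) (p : Finset V → Prop) (α γ : Finset V) :
    blk C (proj C p * f) α γ = if p γ then blk C f α γ else 0 := by
  ext x
  simp only [blk, LinearMap.comp_apply, Module.End.mul_apply]
  conv_lhs => rw [← decomp (f (lof F (Finset V) (fun σ => C.stalk σ) α x))]
  rw [map_sum, map_sum]
  rw [Finset.sum_congr rfl (fun ω _ => by rw [proj_lof_apply])]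
  have : ∀ ω : Finset V, (DirectSum.component F (Finset V) (fun σ => C.stalk σ) γ)
      (if p ω then lof F (Finset V) (fun σ => C.stalk σ) ω
        ((DirectSum.component F (Finset V) (fun σ => C.stalk σ) ω)
          (f (lof F (Finset V) (fun σ => C.stalk σ) α x))) else 0)
      = if p γ then (if h : ω = γ then h ▸ ((DirectSum.component F (Finset V) (fun σ => C.stalk σ) ω)
          (f (lof F (Finset V) (fun σ => C.stalk σ) α x))) else 0) else 0 := by
    intro ω
    by_cases hω : p ω
    · rw [if_pos hω, component_lof]
      by_cases h : ω = γ
      · subst h; simp [hω]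
      · simp [h]
    · rw [if_neg hω]
      by_cases h : ω = γ
      · subst h; simp [hω]
      · simp [h]
  rw [Finset.sum_congr rfl (fun ω _ => this ω)]
  by_cases hγ : p γ
  · simp only [if_pos hγ]
    rw [Finset.sum_dite_eq']
    simp [blk]
  · simp [hγ]

section Incidence

lemma incidence_ne_zero {σ τ : Finset V} (h : incidence F σ τ ≠ 0) :
    τ ⊆ σ ∧ σ.card = τ.card + 1 := by
  by_contra hc
  exact h (if_neg hc)

lemma incidence_eq_pow {σ τ : Finset V} {v : V} (hsub : τ ⊆ σ) (hc : σ.card = τ.card + 1)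
    (hv : σ \ τ = {v}) :
    incidence F σ τ = (-1 : F) ^ (σ.filter (fun w => w < v)).card := by
  rw [incidence, if_pos ⟨hsub, hc⟩, hv, Finset.sum_singleton]

lemma sdiff_card_one {σ τ : Finset V} (hsub : τ ⊆ σ) (hc : σ.card = τ.card + 1) :
    ∃ v, σ \ τ = {v} := by
  have : (σ \ τ).card = 1 := by
    rw [Finset.card_sdiff_of_subset hsub, hc]; omega
  exact Finset.card_eq_one.mp this

lemma incidence_mul_self {σ τ : Finset V} (hsub : τ ⊆ σ) (hc : σ.card = τ.card + 1) :
    incidence F σ τ * incidence F σ τ = 1 := by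
  obtain ⟨v, hv⟩ := sdiff_card_one hsub hc
  rw [incidence_eq_pow hsub hc hv, ← pow_add]
  rw [show ((σ.filter (fun w => w < v)).card + (σ.filter (fun w => w < v)).card)
    = 2 * (σ.filter (fun w => w < v)).card by ring, pow_mul]
  norm_num

lemma incidence_key_aux {α γ : Finset V} {u v : V} (hsub : γ ⊆ α) (hc : α.card = γ.card + 2)
    (huv : u < v) (hset : α \ γ = {u, v}) :
    ∑ β : Finset V, incidence F α β * incidence F β γ = 0 := by
  have hune : u ≠ v := ne_of_lt huv
  have humem : u ∈ α ∧ u ∉ γ := by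
    have : u ∈ α \ γ := by rw [hset]; simp
    simpa [Finset.mem_sdiff] using this
  have hvmem : v ∈ α ∧ v ∉ γ := by
    have : v ∈ α \ γ := by rw [hset]; simp
    simpa [Finset.mem_sdiff] using this
  set β₁ := α.erase v with hβ₁
  set β₂ := α.erase u with hβ₂
  have hβ₁a : β₁ ⊆ α := Finset.erase_subset _ _
  have hβ₂a : β₂ ⊆ α := Finset.erase_subset _ _
  have hcard₁ : α.card = β₁.card + 1 := by
    rw [hβ₁, Finset.card_erase_of_mem hvmem.1]; omega
  have hcard₂ : α.card = β₂.card + 1 := by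
    rw [hβ₂, Finset.card_erase_of_mem humem.1]; omega
  have hγβ₁ : γ ⊆ β₁ := fun x hx => Finset.mem_erase.mpr ⟨fun hxv => hvmem.2 (hxv ▸ hx), hsub hx⟩
  have hγβ₂ : γ ⊆ β₂ := fun x hx => Finset.mem_erase.mpr ⟨fun hxu => humem.2 (hxu ▸ hx), hsub hx⟩
  have hcγ₁ : β₁.card = γ.card + 1 := by omega
  have hcγ₂ : β₂.card = γ.card + 1 := by omega
  have hd₁ : α \ β₁ = {v} := by
    ext w
    simp only [Finset.mem_sdiff, hβ₁, Finset.mem_erase, Finset.mem_singleton]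
    constructor
    · rintro ⟨hwα, hw⟩
      by_contra hne
      exact hw ⟨hne, hwα⟩
    · rintro rfl
      exact ⟨hvmem.1, fun h => h.1 rfl⟩
  have hd₂ : α \ β₂ = {u} := by
    ext w
    simp only [Finset.mem_sdiff, hβ₂, Finset.mem_erase, Finset.mem_singleton]
    constructor
    · rintro ⟨hwα, hw⟩
      by_contra hne
      exact hw ⟨hne, hwα⟩
    · rintro rfl
      exact ⟨humem.1, fun h => h.1 rfl⟩
  have he₁ : β₁ \ γ = {u} := by
    ext w
    simp only [Finset.mem_sdiff, hβ₁, Finset.mem_erase, Finset.mem_singleton]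
    constructor
    · rintro ⟨⟨hwv, hwα⟩, hwγ⟩
      have : w ∈ α \ γ := Finset.mem_sdiff.mpr ⟨hwα, hwγ⟩
      rw [hset] at this
      simp only [Finset.mem_insert, Finset.mem_singleton] at this
      tauto
    · rintro rfl
      exact ⟨⟨hune, humem.1⟩, humem.2⟩
  have he₂ : β₂ \ γ = {v} := by
    ext w
    simp only [Finset.mem_sdiff, hβ₂, Finset.mem_erase, Finset.mem_singleton]
    constructor
    · rintro ⟨⟨hwu, hwα⟩, hwγ⟩
      have : w ∈ α \ γ := Finset.mem_sdiff.mpr ⟨hwα, hwγ⟩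
      rw [hset] at this
      simp only [Finset.mem_insert, Finset.mem_singleton] at this
      tauto
    · rintro rfl
      exact ⟨⟨hune.symm, hvmem.1⟩, hvmem.2⟩
  have hfil₁ : β₁.filter (fun w => w < u) = α.filter (fun w => w < u) := by
    ext w
    simp only [Finset.mem_filter, hβ₁, Finset.mem_erase]
    constructor
    · rintro ⟨⟨_, hwα⟩, hwu⟩; exact ⟨hwα, hwu⟩
    · rintro ⟨hwα, hwu⟩
      exact ⟨⟨fun hwv => absurd (hwv ▸ hwu) (not_lt.mpr (le_of_lt huv)), hwα⟩, hwu⟩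
  have hfil₂ : β₂.filter (fun w => w < v) = (α.filter (fun w => w < v)).erase u := by
    ext w
    simp only [Finset.mem_filter, hβ₂, Finset.mem_erase]
    tauto
  have humemfil : u ∈ α.filter (fun w => w < v) := Finset.mem_filter.mpr ⟨humem.1, huv⟩
  have hpos : 0 < (α.filter (fun w => w < v)).card := Finset.card_pos.mpr ⟨u, humemfil⟩
  have hβne : β₁ ≠ β₂ := by
    intro h
    have : u ∉ β₁ := h ▸ Finset.notMem_erase u α
    exact this (Finset.mem_erase.mpr ⟨hune, humem.1⟩)
  have hvanish : ∀ β : Finset V, β ∉ ({β₁, β₂} : Finset (Finset V)) →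
      incidence F α β * incidence F β γ = 0 := by
    intro β hβ
    by_contra hne
    have h1 : incidence F α β ≠ 0 := fun h => hne (by rw [h, zero_mul])
    have h2 : incidence F β γ ≠ 0 := fun h => hne (by rw [h, mul_zero])
    obtain ⟨hβα, hcαβ⟩ := incidence_ne_zero h1
    obtain ⟨hγβ, _⟩ := incidence_ne_zero h2
    obtain ⟨w, hw⟩ := sdiff_card_one hβα hcαβ
    have hwαβ : w ∈ α ∧ w ∉ β := by
      have : w ∈ α \ β := by rw [hw]; simp
      simpa [Finset.mem_sdiff] using this
    have hwuv : w = u ∨ w = v := by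
      have : w ∈ α \ γ := Finset.mem_sdiff.mpr ⟨hwαβ.1, fun hc => hwαβ.2 (hγβ hc)⟩
      rw [hset] at this
      simpa using this
    have hβw : β = α.erase w := by
      ext x
      simp only [Finset.mem_erase]
      constructor
      · intro hx
        refine ⟨fun hxw => hwαβ.2 (hxw ▸ hx), hβα hx⟩
      · rintro ⟨hxw, hxα⟩
        by_contra hxβ
        have : x ∈ α \ β := Finset.mem_sdiff.mpr ⟨hxα, hxβ⟩
        rw [hw] at this
        exact hxw (by simpa using this)
    apply hβ
    simp only [Finset.mem_insert, Finset.mem_singleton]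
    rcases hwuv with rfl | rfl
    · right; exact hβw
    · left; exact hβw
  have hsum : ∑ β : Finset V, incidence F α β * incidence F β γ
      = ∑ β ∈ ({β₁, β₂} : Finset (Finset V)), incidence F α β * incidence F β γ := by
    symm
    apply Finset.sum_subset (Finset.subset_univ _)
    intro β _ hβ
    exact hvanish β hβ
  rw [hsum, Finset.sum_pair hβne]
  rw [incidence_eq_pow hβ₁a hcard₁ hd₁, incidence_eq_pow hγβ₁ hcγ₁ he₁,
      incidence_eq_pow hβ₂a hcard₂ hd₂, incidence_eq_pow hγβ₂ hcγ₂ he₂]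
  rw [hfil₁, hfil₂, Finset.card_erase_of_mem humemfil]
  obtain ⟨c, hc'⟩ : ∃ c, (α.filter (fun w => w < v)).card = c + 1 :=
    ⟨(α.filter (fun w => w < v)).card - 1, by omega⟩
  rw [hc']
  simp only [Nat.add_sub_cancel, pow_succ]
  ring

lemma incidence_key (α γ : Finset V) :
    ∑ β : Finset V, incidence F α β * incidence F β γ = 0 := by
  by_cases h : γ ⊆ α ∧ α.card = γ.card + 2
  · have hcard : (α \ γ).card = 2 := by
      rw [Finset.card_sdiff_of_subset h.1, h.2]; omega
    obtain ⟨u, v, huv, hset⟩ := Finset.card_eq_two.mp hcard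
    rcases lt_or_gt_of_ne huv with hlt | hgt
    · exact incidence_key_aux h.1 h.2 hlt hset
    · exact incidence_key_aux h.1 h.2 hgt (by rw [hset, Finset.pair_comm])
  · apply Finset.sum_eq_zero
    intro β _
    by_contra hne
    have h1 : incidence F α β ≠ 0 := fun hz => hne (by rw [hz, zero_mul])
    have h2 : incidence F β γ ≠ 0 := fun hz => hne (by rw [hz, mul_zero])
    obtain ⟨hβα, hcαβ⟩ := incidence_ne_zero h1
    obtain ⟨hγβ, hcβγ⟩ := incidence_ne_zero h2
    exact h ⟨hγβ.trans hβα, by omega⟩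

end Incidence


section MatchingLemmas

variable {K : SimpComplex V}

/-- lower half of a matched pair -/
def lowH (S : Matching K) (σ : Finset V) : Prop := ∃ τ, (σ, τ) ∈ S.pairs

/-- upper half of a matched pair -/
def uppH (S : Matching K) (τ : Finset V) : Prop := ∃ σ, (σ, τ) ∈ S.pairs

variable {S : Matching K}

lemma pair_right_unique {σ τ τ' : Finset V} (h1 : (σ, τ) ∈ S.pairs) (h2 : (σ, τ') ∈ S.pairs) :
    τ = τ' := by
  by_contra hne
  have hpq : (σ, τ) ≠ (σ, τ') := fun h => hne (congrArg Prod.snd h)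
  exact (S.pairwise_distinct _ h1 _ h2 hpq).1 rfl

lemma pair_left_unique {σ σ' τ : Finset V} (h1 : (σ, τ) ∈ S.pairs) (h2 : (σ', τ) ∈ S.pairs) :
    σ = σ' := by
  by_contra hne
  have hpq : (σ, τ) ≠ (σ', τ) := fun h => hne (congrArg Prod.fst h)
  exact ((S.pairwise_distinct _ h1 _ h2 hpq).2.2.2) rfl

lemma pair_card {σ τ : Finset V} (h : (σ, τ) ∈ S.pairs) : τ.card = σ.card + 1 :=
  (S.facet _ h).2

lemma pair_subset {σ τ : Finset V} (h : (σ, τ) ∈ S.pairs) : σ ⊆ τ :=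
  (S.facet _ h).1

lemma not_low_and_upp {σ : Finset V} (hl : lowH S σ) (hu : uppH S σ) : False := by
  obtain ⟨τ, hτ⟩ := hl
  obtain ⟨ρ, hρ⟩ := hu
  by_cases h : (σ, τ) = (ρ, σ)
  · have h1 : σ = ρ := congrArg Prod.fst h
    have h2 : τ = σ := congrArg Prod.snd h
    have := pair_card hτ
    rw [h2] at this
    omega
  · exact (S.pairwise_distinct _ hτ _ hρ h).2.1 rfl

lemma critical_iff {σ : Finset V} : S.Critical σ ↔ ¬ lowH S σ ∧ ¬ uppH S σ := by
  constructor
  · intro h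
    constructor
    · rintro ⟨τ, hτ⟩; exact (h _ hτ).1 rfl
    · rintro ⟨ρ, hρ⟩; exact (h _ hρ).2 rfl
  · rintro ⟨hl, hu⟩ p hp
    constructor
    · intro h; subst h; exact absurd ⟨p.2, by simpa using hp⟩ hl
    · intro h; subst h; exact absurd ⟨p.1, by simpa using hp⟩ hu

end MatchingLemmas

section CosheafLemmas

variable {C : Cosheaf F V}

lemma extMap_comp_extMap {α β γ : Finset V} (h1 : β ⊆ α) (h2 : γ ⊆ β) :
    (C.extMap β γ).comp (C.extMap α β) = C.extMap α γ := by
  rw [Cosheaf.extMap, Cosheaf.extMap, Cosheaf.extMap, dif_pos h1, dif_pos h2,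
    dif_pos (h2.trans h1), C.ext_comp]

lemma extMap_comp_invExt {σ τ : Finset V} (hb : Function.Bijective (C.extMap τ σ)) :
    (C.extMap τ σ).comp (C.invExt τ σ) = LinearMap.id := by
  rw [Cosheaf.invExt, dif_pos hb]
  ext x
  simp only [LinearMap.comp_apply, LinearMap.coe_coe, LinearMap.id_apply]
  show (LinearEquiv.ofBijective (C.extMap τ σ) hb)
      ((LinearEquiv.ofBijective (C.extMap τ σ) hb).symm x) = x
  exact LinearEquiv.apply_symm_apply _ x

lemma invExt_comp_extMap {σ τ : Finset V} (hb : Function.Bijective (C.extMap τ σ)) :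
    (C.invExt τ σ).comp (C.extMap τ σ) = LinearMap.id := by
  rw [Cosheaf.invExt, dif_pos hb]
  ext x
  simp only [LinearMap.comp_apply, LinearMap.coe_coe, LinearMap.id_apply]
  show (LinearEquiv.ofBijective (C.extMap τ σ) hb).symm
      ((LinearEquiv.ofBijective (C.extMap τ σ) hb) x) = x
  exact LinearEquiv.symm_apply_apply _ x

end CosheafLemmas

section Operators

variable {K : SimpComplex V}

def dB (C : Cosheaf F V) : ∀ α ω : Finset V, C.stalk α →ₗ[F] C.stalk ω :=
  fun α ω => incidence F α ω • C.extMap α ω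

def EB (C : Cosheaf F V) (S : Matching K) : ∀ σ τ : Finset V, C.stalk σ →ₗ[F] C.stalk τ :=
  fun σ τ => if (σ, τ) ∈ S.pairs then (-(incidence F τ σ)) • C.invExt τ σ else 0

def GB (C : Cosheaf F V) (S : Matching K) : ∀ τ σ : Finset V, C.stalk τ →ₗ[F] C.stalk σ :=
  fun τ σ => if (σ, τ) ∈ S.pairs then (-(incidence F τ σ)) • C.extMap τ σ else 0

def Dg (C : Cosheaf F V) : Module.End F (Big C) := glob C (dB C)
def Eg (C : Cosheaf F V) (S : Matching K) : Module.End F (Big C) := glob C (EB C S)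
def Gg (C : Cosheaf F V) (S : Matching K) : Module.End F (Big C) := glob C (GB C S)
def Lp (C : Cosheaf F V) (S : Matching K) : Module.End F (Big C) := proj C (lowH S)
def Up (C : Cosheaf F V) (S : Matching K) : Module.End F (Big C) := proj C (uppH S)
def Ap (C : Cosheaf F V) (S : Matching K) : Module.End F (Big C) := proj C S.Critical
def T0 (C : Cosheaf F V) (S : Matching K) : Module.End F (Big C) :=
  Lp C S * Dg C * Eg C S + Lp C S

variable {C : Cosheaf F V} {S : Matching K}

lemma proj_mul_proj (p : Finset V → Prop) : proj C p * proj C p = proj C p := by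
  apply DirectSum.linearMap_ext
  intro σ
  ext x : 1
  simp only [LinearMap.comp_apply, Module.End.mul_apply, proj_lof_apply]
  by_cases h : p σ
  · rw [if_pos h, proj_lof_apply, if_pos h]
  · rw [if_neg h, map_zero]

lemma EB_eq_zero {σ τ : Finset V} (h : ¬ lowH S σ) : EB C S σ τ = 0 := by
  rw [EB, if_neg]
  intro hmem
  exact h ⟨τ, hmem⟩

lemma Eg_mul_Lp : Eg C S * Lp C S = Eg C S := by
  apply DirectSum.linearMap_ext
  intro σ
  ext x : 1
  simp only [LinearMap.comp_apply, Module.End.mul_apply, Lp, proj_lof_apply]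
  by_cases h : lowH S σ
  · rw [if_pos h]
  · rw [if_neg h, map_zero, Eg, glob_lof_apply]
    symm
    apply Finset.sum_eq_zero
    intro τ _
    rw [EB_eq_zero h]
    simp

lemma invExt_extMap_apply {σ τ : Finset V} (hb : Function.Bijective (C.extMap τ σ))
    (x : C.stalk τ) : C.invExt τ σ (C.extMap τ σ x) = x := by
  have h := invExt_comp_extMap (C := C) hb
  have := congrArg (fun (m : C.stalk τ →ₗ[F] C.stalk τ) => m x) h
  simpa using this

lemma extMap_invExt_apply {σ τ : Finset V} (hb : Function.Bijective (C.extMap τ σ))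
    (x : C.stalk σ) : C.extMap τ σ (C.invExt τ σ x) = x := by
  have h := extMap_comp_invExt (C := C) hb
  have := congrArg (fun (m : C.stalk σ →ₗ[F] C.stalk σ) => m x) h
  simpa using this

lemma Eg_mul_Gg (hcomp : S.Compatible C) : Eg C S * Gg C S = Up C S := by
  apply DirectSum.linearMap_ext
  intro τ
  ext x : 1
  simp only [LinearMap.comp_apply, Module.End.mul_apply, Up, proj_lof_apply]
  rw [Gg, glob_lof_apply, map_sum]
  rw [Finset.sum_congr rfl (fun σ _ => by rw [Eg, glob_lof_apply])]
  by_cases hu : uppH S τ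
  · obtain ⟨σ₀, hσ₀⟩ := hu
    rw [if_pos ⟨σ₀, hσ₀⟩]
    rw [Finset.sum_eq_single σ₀]
    · rw [Finset.sum_eq_single τ]
      · have hb := hcomp _ hσ₀
        have hEq : EB C S σ₀ τ (GB C S τ σ₀ x) = x := by
          rw [EB, GB, if_pos hσ₀, if_pos hσ₀]
          simp only [LinearMap.smul_apply, map_smul, smul_smul]
          rw [invExt_extMap_apply hb, neg_mul_neg,
            incidence_mul_self (pair_subset hσ₀) (pair_card hσ₀), one_smul]
        rw [hEq]
      · intro τ' _ hne
        have : EB C S σ₀ τ' = 0 := by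
          rw [EB, if_neg]
          intro hmem
          exact hne (pair_right_unique hmem hσ₀)
        rw [this]
        simp
      · intro h
        exact absurd (Finset.mem_univ τ) h
    · intro σ _ hne
      have : GB C S τ σ = 0 := by
        rw [GB, if_neg]
        intro hmem
        exact hne (pair_left_unique hmem hσ₀)
      rw [this]
      simp only [LinearMap.zero_apply, map_zero]
      apply Finset.sum_eq_zero
      intro τ' _
      simp
    · intro h
      exact absurd (Finset.mem_univ σ₀) h
  · rw [if_neg hu]
    apply Finset.sum_eq_zero
    intro σ _
    have : GB C S τ σ = 0 := by
      rw [GB, if_neg]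
      intro hmem
      exact hu ⟨σ, hmem⟩
    rw [this]
    simp only [LinearMap.zero_apply, map_zero]
    apply Finset.sum_eq_zero
    intro τ' _
    simp

lemma dB_comp_dB (α β γ : Finset V) :
    (dB C β γ).comp (dB C α β) = (incidence F α β * incidence F β γ) • C.extMap α γ := by
  rw [dB, dB, LinearMap.comp_smul, LinearMap.smul_comp, smul_smul]
  by_cases h1 : incidence F α β = 0
  · rw [h1]
    simp
  by_cases h2 : incidence F β γ = 0
  · rw [h2]
    simp
  obtain ⟨hβα, _⟩ := incidence_ne_zero h1
  obtain ⟨hγβ, _⟩ := incidence_ne_zero h2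
  rw [extMap_comp_extMap hβα hγβ, mul_comm]

lemma Dg_mul_Dg : Dg C * Dg C = 0 := by
  apply ext_blk
  intro α γ
  rw [blk_mul, blk_zero]
  rw [Finset.sum_congr rfl (fun β _ => by rw [Dg, blk_glob, blk_glob, dB_comp_dB])]
  rw [← Finset.sum_smul, incidence_key, zero_smul]

lemma Lp_mul_Lp : Lp C S * Lp C S = Lp C S := proj_mul_proj _

lemma T0_mul_Lp : T0 C S * Lp C S = T0 C S := by
  rw [T0, add_mul, mul_assoc, Eg_mul_Lp, Lp_mul_Lp]

lemma Lp_mul_T0 : Lp C S * T0 C S = T0 C S := by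
  rw [T0, mul_add, ← mul_assoc, ← mul_assoc, Lp_mul_Lp]

end Operators

section Paths

variable {K : SimpComplex V} {C : Cosheaf F V} {S : Matching K}

lemma isSigmaPath_infix {l l' : List (Finset V × Finset V)} (h : IsSigmaPath S l)
    (hinf : l' <:+: l) (hne : l' ≠ []) : IsSigmaPath S l' :=
  ⟨hne, fun p hp => h.2.1 p (hinf.subset hp), h.2.2.infix hinf⟩

lemma sigmaPath_nodup_aux (hacyc : S.Acyclic) {l : List (Finset V × Finset V)}
    (h : IsSigmaPath S l) (i j : Fin l.length) (hij : (i : ℕ) < (j : ℕ))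
    (heq : l.get i = l.get j) : False := by
  set l' := (l.drop i.val).take (j.val - i.val + 1) with hl'
  have hjlen : (j : ℕ) < l.length := j.isLt
  have hlen : l'.length = j.val - i.val + 1 := by
    rw [hl', List.length_take, List.length_drop]
    omega
  have hne' : l' ≠ [] := by
    intro hc
    rw [hc] at hlen
    simp at hlen
  have hgetElem : ∀ k (hk : k < l'.length), l'[k] = l[i.val + k]'(by omega) := by
    intro k hk
    simp only [hl']
    rw [List.getElem_take, List.getElem_drop]
  have hinf : l' <:+: l := by
    have h1 : l' <+: l.drop i.val := List.take_prefix _ _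
    have h2 : l.drop i.val <:+ l := List.drop_suffix _ _
    exact h1.isInfix.trans h2.isInfix
  have hsp : IsSigmaPath S l' := isSigmaPath_infix h hinf hne'
  have hhead : l'.head hne' = l.get i := by
    rw [List.head_eq_getElem, hgetElem 0 (by omega), List.get_eq_getElem]
    simp
  have hlast : l'.getLast hne' = l.get j := by
    rw [List.getLast_eq_getElem, hgetElem _ (by omega), List.get_eq_getElem]
    congr 1
    omega
  have hlong : 1 < l'.length := by omega
  apply hacyc l' hsp hne' hlong
  rw [hhead, hlast, ← heq]
  have hmem : l.get i ∈ l := List.get_mem _ _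
  exact pair_subset (h.2.1 _ hmem)

lemma sigmaPath_nodup (hacyc : S.Acyclic) {l : List (Finset V × Finset V)}
    (h : IsSigmaPath S l) : l.Nodup := by
  by_contra hnd
  rw [List.nodup_iff_injective_get] at hnd
  obtain ⟨a, b, hab, hne⟩ := Function.not_injective_iff.mp hnd
  have hne' : (a : ℕ) ≠ (b : ℕ) := fun hc => hne (Fin.ext hc)
  rcases Nat.lt_or_ge (a : ℕ) (b : ℕ) with hlt | hge
  · exact sigmaPath_nodup_aux hacyc h a b hlt hab
  · exact sigmaPath_nodup_aux hacyc h b a (by omega) hab.symm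

lemma sigmaPath_length_le (hacyc : S.Acyclic) {l : List (Finset V × Finset V)}
    (h : IsSigmaPath S l) : l.length ≤ S.pairs.card := by
  have hnd := sigmaPath_nodup hacyc h
  have hsub : l.toFinset ⊆ S.pairs := by
    intro p hp
    exact h.2.1 p (List.mem_toFinset.mp hp)
  calc l.length = l.toFinset.card := (List.toFinset_card_of_nodup hnd).symm
    _ ≤ S.pairs.card := Finset.card_le_card hsub

lemma sigmaPath_tail {p q : Finset V × Finset V} {l : List (Finset V × Finset V)}
    (h : IsSigmaPath S (p :: q :: l)) : IsSigmaPath S (q :: l) :=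
  ⟨List.cons_ne_nil _ _, fun r hr => h.2.1 r (List.mem_cons_of_mem _ hr),
    (List.isChain_cons_cons.mp h.2.2).2⟩

lemma sigmaPath_card {l : List (Finset V × Finset V)} (h : IsSigmaPath S l) (hne : l ≠ []) :
    (l.getLast hne).2.card = (l.head hne).1.card + 1 := by
  induction l with
  | nil => exact absurd rfl hne
  | cons p l ih =>
    cases l with
    | nil =>
      simp only [List.getLast_singleton, List.head_cons]
      exact pair_card (h.2.1 p (List.mem_cons_self))
    | cons q l' =>
      have htail := sigmaPath_tail h
      have hrec := ih htail (List.cons_ne_nil _ _)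
      rw [List.getLast_cons (List.cons_ne_nil _ _), List.head_cons]
      rw [List.head_cons] at hrec
      have hch := (List.isChain_cons_cons.mp h.2.2).1
      have hp := pair_card (h.2.1 p (List.mem_cons_self))
      omega

/-- reachability via a `Σ`-path of `m+1` pairs, ready for one more transition to `σ'` -/
def Reach (S : Matching K) (m : ℕ) (σ σ' : Finset V) : Prop :=
  ∃ l : List (Finset V × Finset V), IsSigmaPath S l ∧ l.length = m + 1 ∧
    ∃ hne : l ≠ [], (l.head hne).1 = σ ∧ σ' ⊆ (l.getLast hne).2 ∧
      (l.getLast hne).2.card = σ'.card + 1 ∧ σ' ≠ (l.getLast hne).1 ∧ lowH S σ'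

lemma blk_T0 (σ σ' : Finset V) :
    blk C (T0 C S) σ σ' =
      (if lowH S σ' then ∑ τ : Finset V, (dB C τ σ').comp (EB C S σ τ) else 0)
        + blk C (Lp C S) σ σ' := by
  rw [T0, blk_add, mul_assoc, Lp]
  rw [blk_proj_mul, blk_mul]
  rw [Finset.sum_congr rfl (fun τ _ => by rw [Dg, Eg, blk_glob, blk_glob])]

lemma blk_Lp_ne {σ σ' : Finset V} (h : σ ≠ σ') : blk C (Lp C S) σ σ' = 0 := by
  ext x
  simp only [blk, LinearMap.comp_apply, LinearMap.zero_apply, Lp, proj_lof_apply]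
  by_cases hl : lowH S σ
  · rw [if_pos hl, component_lof, dif_neg h]
  · rw [if_neg hl, map_zero]

lemma blk_Lp_diag (σ : Finset V) :
    blk C (Lp C S) σ σ = if lowH S σ then LinearMap.id else 0 := by
  ext x
  simp only [blk, LinearMap.comp_apply, Lp, proj_lof_apply]
  by_cases hl : lowH S σ
  · rw [if_pos hl, if_pos hl, component_lof, dif_pos rfl]
    rfl
  · rw [if_neg hl, if_neg hl, map_zero]
    rfl

lemma EB_eq_zero' {σ τ : Finset V} (h : (σ, τ) ∉ S.pairs) : EB C S σ τ = 0 :=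
  if_neg h

lemma blk_T0_diag (hcomp : S.Compatible C) (σ : Finset V) : blk C (T0 C S) σ σ = 0 := by
  rw [blk_T0, blk_Lp_diag]
  by_cases hl : lowH S σ
  · rw [if_pos hl, if_pos hl]
    obtain ⟨τ₀, hτ₀⟩ := hl
    rw [Finset.sum_eq_single τ₀]
    · rw [dB, EB, if_pos hτ₀, LinearMap.comp_smul, LinearMap.smul_comp, smul_smul,
        extMap_comp_invExt (hcomp _ hτ₀), neg_mul,
        incidence_mul_self (pair_subset hτ₀) (pair_card hτ₀)]
      simp
    · intro τ _ hne
      rw [EB_eq_zero' (fun hmem => hne (pair_right_unique hmem hτ₀)), LinearMap.comp_zero]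
    · intro habs
      exact absurd (Finset.mem_univ τ₀) habs
  · rw [if_neg hl, if_neg hl, add_zero]

lemma blk_T0_ne_zero (hcomp : S.Compatible C) {σ σ' : Finset V}
    (h : blk C (T0 C S) σ σ' ≠ 0) :
    lowH S σ' ∧ σ' ≠ σ ∧ ∃ τ, (σ, τ) ∈ S.pairs ∧ σ' ⊆ τ ∧ τ.card = σ'.card + 1 := by
  by_cases heq : σ = σ'
  · exact absurd (heq ▸ blk_T0_diag hcomp σ) h
  rw [blk_T0, blk_Lp_ne heq, add_zero] at h
  by_cases hl : lowH S σ'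
  · rw [if_pos hl] at h
    refine ⟨hl, fun hc => heq hc.symm, ?_⟩
    by_contra hc
    push_neg at hc
    apply h
    apply Finset.sum_eq_zero
    intro τ _
    by_cases hp : (σ, τ) ∈ S.pairs
    · by_cases hd : incidence F τ σ' = 0
      · rw [dB, hd, zero_smul, LinearMap.zero_comp]
      · obtain ⟨hsub, hcard⟩ := incidence_ne_zero hd
        exact absurd hcard (hc τ hp hsub)
    · rw [EB_eq_zero' hp, LinearMap.comp_zero]
  · rw [if_neg hl] at h
    exact absurd rfl h

lemma reach_of_pow (hcomp : S.Compatible C) :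
    ∀ m (σ σ' : Finset V), blk C ((T0 C S) ^ (m + 1)) σ σ' ≠ 0 → Reach S m σ σ' := by
  intro m
  induction m with
  | zero =>
    intro σ σ' h
    rw [pow_one] at h
    obtain ⟨hl, hne, τ, hτ, hsub, hcard⟩ := blk_T0_ne_zero hcomp h
    refine ⟨[(σ, τ)], ⟨List.cons_ne_nil _ _, ?_, List.isChain_singleton _⟩, rfl,
      List.cons_ne_nil _ _, rfl, ?_, ?_, ?_, hl⟩
    · intro p hp
      rw [List.mem_singleton] at hp
      rw [hp]
      exact hτ
    · simpa using hsub
    · simpa using hcard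
    · simpa using hne
  | succ m ih =>
    intro σ σ' h
    rw [pow_succ'] at h
    rw [blk_mul] at h
    obtain ⟨β, _, hterm⟩ := Finset.exists_ne_zero_of_sum_ne_zero h
    have h1 : blk C (T0 C S) β σ' ≠ 0 := by
      intro hc
      rw [hc, LinearMap.zero_comp] at hterm
      exact hterm rfl
    have h2 : blk C ((T0 C S) ^ (m + 1)) σ β ≠ 0 := by
      intro hc
      rw [hc, LinearMap.comp_zero] at hterm
      exact hterm rfl
    obtain ⟨l, hsp, hlen, hne, hhead, hsubβ, hcardβ, hneβ, hlowβ⟩ := ih σ β h2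
    obtain ⟨hl', hne', τβ, hτβ, hsub', hcard'⟩ := blk_T0_ne_zero hcomp h1
    refine ⟨l ++ [(β, τβ)], ⟨?_, ?_, ?_⟩, ?_, ?_, ?_, ?_, ?_, ?_, hl'⟩
    · simp
    · intro p hp
      rcases List.mem_append.mp hp with hp1 | hp2
      · exact hsp.2.1 p hp1
      · rw [List.mem_singleton] at hp2
        rw [hp2]
        exact hτβ
    · rw [List.Chain', List.isChain_append]
      refine ⟨hsp.2.2, List.isChain_singleton _, ?_⟩
      intro x hx y hy
      rw [List.getLast?_eq_getLast hne, Option.mem_some_iff] at hx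
      simp only [List.head?_cons, Option.mem_some_iff] at hy
      subst hx
      subst hy
      exact ⟨hsubβ, hcardβ, hneβ⟩
    · simp [hlen]
    · exact by simp
    · rw [List.head_append]
      simp only [List.isEmpty_iff]
      rw [dif_neg hne]
      exact hhead
    all_goals
      rw [List.getLast_append]
      simp only [List.isEmpty_cons, dif_neg]
      first
        | (show σ' ⊆ _ ; simpa using hsub')
        | (show _ = σ'.card + 1 ; simpa using hcard')
        | (show σ' ≠ _ ; simpa using hne')

lemma T0_nilpotent (hacyc : S.Acyclic) (hcomp : S.Compatible C) :
    (T0 C S) ^ (S.pairs.card + 1) = 0 := by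
  apply ext_blk
  intro σ σ'
  rw [blk_zero]
  by_contra h
  obtain ⟨l, hsp, hlen, _⟩ := reach_of_pow hcomp S.pairs.card σ σ' h
  have := sigmaPath_length_le hacyc hsp
  omega

end Paths

section Flow

variable {K : SimpComplex V}

def Psi (C : Cosheaf F V) (S : Matching K) : Module.End F (Big C) :=
  ∑ m ∈ Finset.range (S.pairs.card + 1), (T0 C S) ^ m * Lp C S

def Phi (C : Cosheaf F V) (S : Matching K) : Module.End F (Big C) :=
  Eg C S * Psi C S

def Dp (C : Cosheaf F V) (S : Matching K) : Module.End F (Big C) :=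
  Dg C + Dg C * Phi C S * Dg C

variable {C : Cosheaf F V} {S : Matching K}

lemma pow_succ_mul_Lp (m : ℕ) : (T0 C S) ^ (m + 1) * Lp C S = (T0 C S) ^ (m + 1) := by
  rw [pow_succ, mul_assoc, T0_mul_Lp]

lemma sum_shift (hacyc : S.Acyclic) (hcomp : S.Compatible C) :
    ∑ m ∈ Finset.range (S.pairs.card + 1), (T0 C S) ^ (m + 1) * Lp C S + Lp C S
      = Psi C S := by
  have h1 : ∑ m ∈ Finset.range (S.pairs.card + 1 + 1), (T0 C S) ^ m * Lp C S
      = ∑ m ∈ Finset.range (S.pairs.card + 1), (T0 C S) ^ (m + 1) * Lp C S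
        + (T0 C S) ^ 0 * Lp C S := Finset.sum_range_succ' _ _
  have h2 : ∑ m ∈ Finset.range (S.pairs.card + 1 + 1), (T0 C S) ^ m * Lp C S
      = Psi C S + (T0 C S) ^ (S.pairs.card + 1) * Lp C S := Finset.sum_range_succ _ _
  rw [T0_nilpotent hacyc hcomp, zero_mul, add_zero] at h2
  rw [pow_zero, one_mul] at h1
  rw [← h1, h2]

lemma T0_mul_Psi (hacyc : S.Acyclic) (hcomp : S.Compatible C) :
    T0 C S * Psi C S + Lp C S = Psi C S := by
  have h : T0 C S * Psi C S
      = ∑ m ∈ Finset.range (S.pairs.card + 1), (T0 C S) ^ (m + 1) * Lp C S := by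
    rw [Psi, Finset.mul_sum]
    exact Finset.sum_congr rfl (fun m _ => by rw [← mul_assoc, ← pow_succ'])
  rw [h]
  exact sum_shift hacyc hcomp

lemma Lp_mul_psiterm (m : ℕ) :
    Lp C S * ((T0 C S) ^ m * Lp C S) = (T0 C S) ^ m * Lp C S := by
  cases m with
  | zero => rw [pow_zero, one_mul, Lp_mul_Lp]
  | succ m => rw [pow_succ', mul_assoc, ← mul_assoc (Lp C S), Lp_mul_T0]

lemma Lp_mul_Psi : Lp C S * Psi C S = Psi C S := by
  rw [Psi, Finset.mul_sum]
  exact Finset.sum_congr rfl (fun m _ => Lp_mul_psiterm m)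

lemma Lp_Dg_Phi (hacyc : S.Acyclic) (hcomp : S.Compatible C) :
    Lp C S * Dg C * Phi C S + Lp C S = 0 := by
  have hA : Lp C S * Dg C * Phi C S = Lp C S * Dg C * Eg C S * Psi C S := by
    rw [Phi]; rfl
  have hT : T0 C S * Psi C S = Lp C S * Dg C * Eg C S * Psi C S + Psi C S := by
    rw [T0, add_mul, Lp_mul_Psi]
  have hm := T0_mul_Psi hacyc hcomp
  rw [hT] at hm
  have hkey : (Lp C S * Dg C * Eg C S * Psi C S + Lp C S) + Psi C S = 0 + Psi C S := by
    have hr : (Lp C S * Dg C * Eg C S * Psi C S + Lp C S) + Psi C S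
        = Lp C S * Dg C * Eg C S * Psi C S + Psi C S + Lp C S := by abel
    rw [hr, hm, zero_add]
  rw [hA]
  exact add_right_cancel hkey

lemma Psi_Dg_Eg (hacyc : S.Acyclic) (hcomp : S.Compatible C) :
    Psi C S * Dg C * Eg C S + Lp C S = 0 := by
  have hterm : ∀ m, (T0 C S) ^ m * Lp C S * Dg C * Eg C S + (T0 C S) ^ m * Lp C S
      = (T0 C S) ^ (m + 1) * Lp C S := by
    intro m
    have h : (T0 C S) ^ m * (Lp C S * Dg C * Eg C S + Lp C S) = (T0 C S) ^ m * T0 C S := by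
      rw [← T0]
    rw [mul_add, ← pow_succ] at h
    rw [pow_succ_mul_Lp]
    rw [← h]; rfl
  have hsum : Psi C S * Dg C * Eg C S + Psi C S
      = ∑ m ∈ Finset.range (S.pairs.card + 1), (T0 C S) ^ (m + 1) * Lp C S := by
    rw [Psi, Finset.sum_mul, Finset.sum_mul, ← Finset.sum_add_distrib]
    exact Finset.sum_congr rfl (fun m _ => hterm m)
  have hm : (Psi C S * Dg C * Eg C S + Psi C S) + Lp C S = Psi C S := by
    rw [hsum]
    exact sum_shift hacyc hcomp
  have hkey : (Psi C S * Dg C * Eg C S + Lp C S) + Psi C S = 0 + Psi C S := by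
    have hr : (Psi C S * Dg C * Eg C S + Lp C S) + Psi C S
        = Psi C S * Dg C * Eg C S + Psi C S + Lp C S := by abel
    rw [hr, hm, zero_add]
  exact add_right_cancel hkey

lemma Phi_Dg_Eg (hacyc : S.Acyclic) (hcomp : S.Compatible C) :
    Phi C S * Dg C * Eg C S + Eg C S = 0 := by
  have hA : Phi C S * Dg C * Eg C S = Eg C S * (Psi C S * Dg C * Eg C S) := by
    rw [Phi]; rfl
  have h2 : Eg C S * (Psi C S * Dg C * Eg C S + Lp C S) = 0 := by
    rw [Psi_Dg_Eg hacyc hcomp, mul_zero]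
  rw [mul_add, Eg_mul_Lp] at h2
  rw [hA]
  exact h2

lemma Phi_Dg_Up (hacyc : S.Acyclic) (hcomp : S.Compatible C) :
    Phi C S * Dg C * Up C S + Up C S = 0 := by
  rw [← Eg_mul_Gg hcomp]
  have hA : Phi C S * Dg C * (Eg C S * Gg C S) = (Phi C S * Dg C * Eg C S) * Gg C S := rfl
  rw [hA, ← add_mul, Phi_Dg_Eg hacyc hcomp, zero_mul]

lemma Lp_mul_Dp (hacyc : S.Acyclic) (hcomp : S.Compatible C) :
    Lp C S * Dp C S = 0 := by
  rw [Dp, mul_add]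
  have hA : Lp C S * (Dg C * Phi C S * Dg C) = (Lp C S * Dg C * Phi C S) * Dg C := rfl
  rw [hA, ← add_mul]
  have h := Lp_Dg_Phi hacyc hcomp
  rw [add_comm] at h
  rw [h, zero_mul]

lemma Dp_mul_Up (hacyc : S.Acyclic) (hcomp : S.Compatible C) :
    Dp C S * Up C S = 0 := by
  rw [Dp, add_mul]
  have hA : Dg C * Phi C S * Dg C * Up C S = Dg C * (Phi C S * Dg C * Up C S) := rfl
  rw [hA, ← mul_add]
  have h := Phi_Dg_Up hacyc hcomp
  rw [add_comm] at h
  rw [h, mul_zero]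

lemma Dp_mul_Dg : Dp C S * Dg C = 0 := by
  rw [Dp, add_mul, mul_assoc (Dg C * Phi C S), Dg_mul_Dg, mul_zero, add_zero]

lemma Dp_mul_Dp (hacyc : S.Acyclic) (hcomp : S.Compatible C) : Dp C S * Dp C S = 0 := by
  have h : Dp C S * Dp C S = Dp C S * Dg C + Dp C S * (Dg C * Phi C S * Dg C) := by
    nth_rewrite 2 [Dp]
    rw [mul_add]
  have hA : Dp C S * (Dg C * Phi C S * Dg C) = Dp C S * Dg C * Phi C S * Dg C := rfl
  rw [h, hA, Dp_mul_Dg, zero_mul, zero_mul, add_zero]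

lemma partition : Lp C S + Up C S + Ap C S = 1 := by
  apply DirectSum.linearMap_ext
  intro β
  ext x : 1
  simp only [LinearMap.comp_apply, LinearMap.add_apply, Lp, Up, Ap, proj_lof_apply,
    Module.End.one_apply]
  by_cases hl : lowH S β
  · have hu : ¬ uppH S β := fun hu => not_low_and_upp hl hu
    have hc : ¬ S.Critical β := fun hc => (critical_iff.mp hc).1 hl
    rw [if_pos hl, if_neg hu, if_neg hc, add_zero, add_zero]
  · by_cases hu : uppH S β
    · have hc : ¬ S.Critical β := fun hc => (critical_iff.mp hc).2 hu
      rw [if_neg hl, if_pos hu, if_neg hc, zero_add, add_zero]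
    · have hc : S.Critical β := critical_iff.mpr ⟨hl, hu⟩
      rw [if_neg hl, if_neg hu, if_pos hc, zero_add, zero_add]

lemma Dp_Ap_Dp (hacyc : S.Acyclic) (hcomp : S.Compatible C) :
    Dp C S * Ap C S * Dp C S = 0 := by
  have h := congrArg (fun z => Dp C S * z * Dp C S) (partition (C := C) (S := S))
  simp only [mul_one] at h
  rw [Dp_mul_Dp hacyc hcomp] at h
  rw [mul_add, mul_add, add_mul, add_mul] at h
  rw [mul_assoc (Dp C S) (Lp C S), Lp_mul_Dp hacyc hcomp, mul_zero] at h
  rw [Dp_mul_Up hacyc hcomp, zero_mul] at h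
  rw [zero_add, zero_add] at h
  exact h

end Flow

section Bridge

variable {K : SimpComplex V}

/-- the `Σ`-path summand of the Morse block -/
def pathTerm (C : Cosheaf F V) (S : Matching K) (α ω : Finset V)
    (l : List (Finset V × Finset V)) : C.stalk α →ₗ[F] C.stalk ω :=
  if h : IsSigmaPath S l then
    (pathSign F l * incidence F α (l.head h.1).1 * incidence F (l.getLast h.1).2 ω) •
      ((C.extMap (l.getLast h.1).2 ω).comp
        ((pathWeight C l h.1).comp (C.extMap α (l.head h.1).1)))
  else 0

variable {C : Cosheaf F V} {S : Matching K}

lemma morseBlock_eq (α ω : Finset V) :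
    morseBlock C S α ω = dB C α ω +
      ∑ ρ : {l : List (Finset V × Finset V) // l.Nodup}, pathTerm C S α ω ρ.1 := rfl

lemma isSigmaPath_singleton {p : Finset V × Finset V} :
    IsSigmaPath S [p] ↔ p ∈ S.pairs := by
  constructor
  · intro h
    exact h.2.1 p (List.mem_singleton_self p)
  · intro h
    exact ⟨List.cons_ne_nil _ _, fun r hr => by rw [List.mem_singleton] at hr; rw [hr]; exact h,
      List.isChain_singleton _⟩

lemma isSigmaPath_cons_iff {p q : Finset V × Finset V} {l' : List (Finset V × Finset V)} :
    IsSigmaPath S (p :: q :: l') ↔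
      p ∈ S.pairs ∧ IsSigmaPath S (q :: l') ∧
        q.1 ⊆ p.2 ∧ p.2.card = q.1.card + 1 ∧ q.1 ≠ p.1 := by
  constructor
  · intro h
    obtain ⟨⟨h1, h2, h3⟩, _⟩ := List.isChain_cons_cons.mp h.2.2
    exact ⟨h.2.1 p (List.mem_cons_self), sigmaPath_tail h, h1, h2, h3⟩
  · rintro ⟨hp, hq, h1, h2, h3⟩
    refine ⟨List.cons_ne_nil _ _, ?_, List.isChain_cons_cons.mpr ⟨⟨h1, h2, h3⟩, hq.2.2⟩⟩
    intro r hr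
    rcases List.mem_cons.mp hr with hr | hr
    · rw [hr]; exact hp
    · exact hq.2.1 r hr

lemma pair_eq_of_fst {p q : Finset V × Finset V} (hp : p ∈ S.pairs) (hq : q ∈ S.pairs)
    (h : p.1 = q.1) : p = q := by
  have h2 : p.2 = q.2 := by
    apply pair_right_unique (σ := p.1) (τ := p.2) (τ' := q.2)
    · simpa using hp
    · rw [h]; simpa using hq
  exact Prod.ext h h2

lemma pathTerm_cons (hcomp : S.Compatible C) (α ω : Finset V) (p : Finset V × Finset V)
    (l : List (Finset V × Finset V)) (hl : l ≠ []) :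
    pathTerm C S α ω (p :: l)
      = (pathTerm C S p.2 ω l).comp ((EB C S p.1 p.2).comp (dB C α p.1))
        + (if p ∈ S.pairs ∧ (l.head hl).1 = p.1 then pathTerm C S α ω l else 0) := by
  obtain ⟨q, l', rfl⟩ := List.exists_cons_of_ne_nil hl
  have hEB : EB C S p.1 p.2 = if p ∈ S.pairs then (-(incidence F p.2 p.1)) • C.invExt p.2 p.1
      else 0 := by
    rw [EB]
  by_cases hsp2 : IsSigmaPath S (q :: l')
  · by_cases hp : p ∈ S.pairs
    · by_cases hq1 : q.1 = p.1
      · -- cancellation case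
        have hq : q = p := pair_eq_of_fst (hsp2.2.1 q (List.mem_cons_self)) hp hq1
        subst hq
        have hnsp : ¬ IsSigmaPath S (q :: q :: l') := by
          intro h
          exact (isSigmaPath_cons_iff.mp h).2.2.2.2 hq1
        rw [pathTerm, dif_neg hnsp]
        rw [if_pos ⟨hp, hq1⟩]
        rw [pathTerm, pathTerm, dif_pos hsp2, dif_pos hsp2, hEB, if_pos hp]
        have hb := hcomp q hp
        have hsq : incidence F q.2 q.1 * incidence F q.2 q.1 = 1 :=
          incidence_mul_self (pair_subset (by simpa using hp)) (pair_card (by simpa using hp))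
        symm
        ext x
        simp only [LinearMap.add_apply, LinearMap.comp_apply, LinearMap.smul_apply,
          LinearMap.zero_apply, dB, map_smul, smul_smul]
        have hcancel : C.extMap q.2 q.1 (C.invExt q.2 q.1 (C.extMap α q.1 x))
            = C.extMap α q.1 x := extMap_invExt_apply hb _
        erw [hcancel]
        erw [← add_smul]
        convert zero_smul F _
        simp only [List.head_cons]
        linear_combination (-(incidence F α q.1 * pathSign F (q :: l') *
          incidence F (((q :: l').getLast (List.cons_ne_nil q l')).2) ω)) * hsq
      · by_cases hfac : q.1 ⊆ p.2 ∧ p.2.card = q.1.card + 1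
        · -- genuine path case
          have hsp : IsSigmaPath S (p :: q :: l') :=
            isSigmaPath_cons_iff.mpr ⟨hp, hsp2, hfac.1, hfac.2, hq1⟩
          rw [if_neg (fun hc => hq1 hc.2), add_zero]
          rw [pathTerm, pathTerm, dif_pos hsp, dif_pos hsp2, hEB, if_pos hp]
          ext x
          simp only [LinearMap.comp_apply, LinearMap.smul_apply, dB, map_smul, smul_smul]
          have hW : pathWeight C (p :: q :: l') (by simp)
              = (pathWeight C (q :: l') (by simp)).comp
                  ((C.extMap p.2 q.1).comp (C.invExt p.2 p.1)) := rfl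
          have hS : pathSign F (p :: q :: l')
              = (-(incidence F p.2 p.1)) * incidence F p.2 q.1 * pathSign F (q :: l') := rfl
          rw [hW, hS]
          simp only [LinearMap.comp_apply, List.head_cons]
          congr 1
          have hlast : (p :: q :: l').getLast (by simp) = (q :: l').getLast (by simp) :=
            List.getLast_cons _
          rw [hlast]
          ring
        · -- broken facet case
          have hnsp : ¬ IsSigmaPath S (p :: q :: l') := by
            intro h
            obtain ⟨_, _, h1, h2, _⟩ := isSigmaPath_cons_iff.mp h
            exact hfac ⟨h1, h2⟩
          have hinc : incidence F p.2 q.1 = 0 := by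
            rw [incidence, if_neg hfac]
          rw [pathTerm, dif_neg hnsp]
          have hcondF : ¬ (p ∈ S.pairs ∧ ((q :: l').head (List.cons_ne_nil q l')).1 = p.1) := by
            rintro ⟨_, hc⟩
            exact hq1 hc
          rw [if_neg hcondF, add_zero]
          have hterm : pathTerm C S p.2 ω (q :: l') = 0 := by
            rw [pathTerm, dif_pos hsp2]
            simp only [List.head_cons]
            rw [hinc]
            simp
          rw [hterm, LinearMap.zero_comp]
    · -- p not a pair
      have hnsp : ¬ IsSigmaPath S (p :: q :: l') := by
        intro h
        exact hp (isSigmaPath_cons_iff.mp h).1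
      rw [pathTerm, dif_neg hnsp, hEB, if_neg hp, LinearMap.zero_comp, LinearMap.comp_zero,
        if_neg (fun hc => hp hc.1), add_zero]
  · -- tail not a path
    have hnsp : ¬ IsSigmaPath S (p :: q :: l') := by
      intro h
      exact hsp2 (sigmaPath_tail h)
    rw [pathTerm, dif_neg hnsp]
    rw [show pathTerm C S p.2 ω (q :: l') = 0 from dif_neg hsp2]
    rw [show pathTerm C S α ω (q :: l') = 0 from dif_neg hsp2]
    simp
    exact (ite_self _).symm

lemma sumcomp {M₁ M₂ M₃ : Type} [AddCommGroup M₁] [AddCommGroup M₂] [AddCommGroup M₃]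
    [Module F M₁] [Module F M₂] [Module F M₃] {ι : Type} (s : Finset ι)
    (f : ι → (M₂ →ₗ[F] M₃)) (g : M₁ →ₗ[F] M₂) :
    (∑ i ∈ s, f i).comp g = ∑ i ∈ s, (f i).comp g := by
  ext x
  simp

lemma compsum {M₁ M₂ M₃ : Type} [AddCommGroup M₁] [AddCommGroup M₂] [AddCommGroup M₃]
    [Module F M₁] [Module F M₂] [Module F M₃] {ι : Type} (s : Finset ι)
    (f : M₂ →ₗ[F] M₃) (g : ι → (M₁ →ₗ[F] M₂)) :
    f.comp (∑ i ∈ s, g i) = ∑ i ∈ s, f.comp (g i) := by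
  ext x
  simp

def Xm (C : Cosheaf F V) (S : Matching K) (m : ℕ) : Module.End F (Big C) :=
  Dg C * Eg C S * (T0 C S) ^ m * Lp C S * Dg C

lemma Xm_succ (m : ℕ) : Xm C S (m + 1) = Xm C S m * (Eg C S * Dg C) + Xm C S m := by
  have key : (T0 C S) ^ (m + 1) * Lp C S
      = (T0 C S) ^ m * (Lp C S * Dg C * Eg C S) + (T0 C S) ^ m * Lp C S := by
    rw [pow_succ_mul_Lp, pow_succ, T0, mul_add]
  have h0 : Xm C S (m + 1) = Dg C * Eg C S * ((T0 C S) ^ (m + 1) * Lp C S) * Dg C := rfl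
  rw [h0, key, mul_add, add_mul]
  rfl

lemma sum_if_head (α ω : Finset V) (l : List (Finset V × Finset V)) (hl : l ≠ []) :
    ∑ p : Finset V × Finset V,
        (if p ∈ S.pairs ∧ (l.head hl).1 = p.1 then pathTerm C S α ω l else 0)
      = pathTerm C S α ω l := by
  by_cases hsp : IsSigmaPath S l
  · have hp₀ : l.head hl ∈ S.pairs := hsp.2.1 _ (List.head_mem hl)
    rw [Finset.sum_eq_single (l.head hl)]
    · rw [if_pos ⟨hp₀, rfl⟩]
    · intro p _ hne
      rw [if_neg]
      rintro ⟨hp, hh⟩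
      exact hne (pair_eq_of_fst hp hp₀ hh.symm)
    · intro h
      exact absurd (Finset.mem_univ _) h
  · rw [show pathTerm C S α ω l = 0 from dif_neg hsp]
    apply Finset.sum_eq_zero
    intro p _
    split <;> rfl

lemma term_single (α ω σ τ : Finset V) :
    (dB C τ ω).comp ((EB C S σ τ).comp (dB C α σ)) = pathTerm C S α ω [(σ, τ)] := by
  by_cases hp : (σ, τ) ∈ S.pairs
  · rw [pathTerm, dif_pos (isSigmaPath_singleton.mpr hp)]
    ext x
    simp only [dB, EB, if_pos hp, LinearMap.comp_apply, LinearMap.smul_apply, map_smul,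
      smul_smul, List.head_cons, List.getLast_singleton]
    have hW : pathWeight C [(σ, τ)] (List.cons_ne_nil _ _) = C.invExt τ σ := rfl
    have hS : pathSign F [(σ, τ)] = -(incidence F τ σ) := rfl
    rw [hW, hS]
    congr 1
    ring
  · rw [pathTerm, dif_neg (fun h => hp (isSigmaPath_singleton.mp h)), EB, if_neg hp,
      LinearMap.zero_comp, LinearMap.comp_zero]

lemma ofFn_cons {m : ℕ} (p : Finset V × Finset V) (g : Fin (m + 1) → (Finset V × Finset V)) :
    List.ofFn (Fin.cons p g : Fin (m + 2) → (Finset V × Finset V)) = p :: List.ofFn g := by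
  rw [List.ofFn_succ]
  congr 1

lemma blk_Xm (hcomp : S.Compatible C) :
    ∀ m (α ω : Finset V), blk C (Xm C S m) α ω
      = ∑ f : Fin (m + 1) → (Finset V × Finset V), pathTerm C S α ω (List.ofFn f) := by
  intro m
  induction m with
  | zero =>
    intro α ω
    have h0 : Xm C S 0 = Dg C * Eg C S * Dg C := by
      rw [Xm, pow_zero, mul_one, mul_assoc (Dg C), Eg_mul_Lp]
    rw [h0, blk_mul]
    rw [Finset.sum_congr rfl (fun σ _ => by
      rw [blk_mul, show blk C (Dg C) α σ = dB C α σ from blk_glob _ _ _,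
        Finset.sum_congr rfl (fun τ _ => by
          rw [show blk C (Dg C) τ ω = dB C τ ω from blk_glob _ _ _,
            show blk C (Eg C S) σ τ = EB C S σ τ from blk_glob _ _ _]), sumcomp])]
    rw [show (∑ f : Fin 1 → (Finset V × Finset V), pathTerm C S α ω (List.ofFn f))
        = ∑ p : Finset V × Finset V, pathTerm C S α ω [p] from
      Fintype.sum_equiv (Equiv.funUnique (Fin 1) _) _ _ (fun f => by congr 1)]
    rw [Fintype.sum_prod_type]
    refine Finset.sum_congr rfl fun σ _ => Finset.sum_congr rfl fun τ _ => ?_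
    rw [LinearMap.comp_assoc, term_single]
  | succ m ih =>
    intro α ω
    rw [Xm_succ, blk_add, blk_mul]
    have hEgDg : ∀ β, blk C (Eg C S * Dg C) α β
        = ∑ γ : Finset V, (EB C S γ β).comp (dB C α γ) := by
      intro β
      rw [blk_mul]
      exact Finset.sum_congr rfl fun γ _ => by
        rw [show blk C (Eg C S) γ β = EB C S γ β from blk_glob _ _ _,
          show blk C (Dg C) α γ = dB C α γ from blk_glob _ _ _]
    have hLHS : ∑ f : Fin (m + 2) → (Finset V × Finset V), pathTerm C S α ω (List.ofFn f)
        = ∑ p : Finset V × Finset V, ∑ g : Fin (m + 1) → (Finset V × Finset V),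
            pathTerm C S α ω (p :: List.ofFn g) := by
      calc ∑ f : Fin (m + 2) → (Finset V × Finset V), pathTerm C S α ω (List.ofFn f)
          = ∑ y : (Finset V × Finset V) × (Fin (m + 1) → (Finset V × Finset V)),
              pathTerm C S α ω (y.1 :: List.ofFn y.2) :=
            (Fintype.sum_equiv (Fin.consEquiv fun _ => (Finset V × Finset V)) _ _
              (fun y => by rw [show (Fin.consEquiv fun _ => (Finset V × Finset V)) y
                = Fin.cons y.1 y.2 from rfl, ofFn_cons])).symm
        _ = _ := Fintype.sum_prod_type _
    have hne : ∀ g : Fin (m + 1) → (Finset V × Finset V), List.ofFn g ≠ [] := by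
      intro g hc
      have := congrArg List.length hc
      simp at this
    rw [hLHS]
    rw [Finset.sum_congr rfl (fun p _ => Finset.sum_congr rfl (fun g _ =>
      pathTerm_cons hcomp α ω p (List.ofFn g) (hne g)))]
    rw [Finset.sum_congr rfl (fun p _ => Finset.sum_add_distrib)]
    rw [Finset.sum_add_distrib]
    congr 1
    · -- main part
      rw [Finset.sum_congr rfl (fun β _ => by rw [hEgDg β, compsum])]
      have hR : (∑ p : Finset V × Finset V, ∑ g : Fin (m + 1) → (Finset V × Finset V),
            (pathTerm C S p.2 ω (List.ofFn g)).comp ((EB C S p.1 p.2).comp (dB C α p.1)))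
          = ∑ p : Finset V × Finset V,
              (blk C (Xm C S m) p.2 ω).comp ((EB C S p.1 p.2).comp (dB C α p.1)) := by
        refine Finset.sum_congr rfl fun p _ => ?_
        rw [← sumcomp, ← ih p.2 ω]
      rw [hR, Fintype.sum_prod_type]
      exact Finset.sum_comm
    · -- correction part
      rw [Finset.sum_comm]
      rw [Finset.sum_congr rfl (fun g _ => sum_if_head α ω (List.ofFn g) (hne g))]
      exact ih α ω

lemma pathTerm_split (hacyc : S.Acyclic) (α ω : Finset V)
    (ρ : {l : List (Finset V × Finset V) // l.Nodup}) :
    pathTerm C S α ω ρ.1 = ∑ m ∈ Finset.range (S.pairs.card + 1),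
      (if ρ.1.length = m + 1 then pathTerm C S α ω ρ.1 else 0) := by
  by_cases hsp : IsSigmaPath S ρ.1
  · have h1 : 0 < ρ.1.length := List.length_pos_iff.mpr hsp.1
    have h2 : ρ.1.length ≤ S.pairs.card := sigmaPath_length_le hacyc hsp
    rw [Finset.sum_eq_single (ρ.1.length - 1)]
    · rw [if_pos (by omega)]
    · intro m _ hne
      rw [if_neg (by omega)]
    · intro h
      exact absurd (Finset.mem_range.mpr (by omega)) h
  · rw [show pathTerm C S α ω ρ.1 = 0 from dif_neg hsp]
    symm
    apply Finset.sum_eq_zero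
    intro m _
    split <;> rfl

lemma sum_fixed_len (hacyc : S.Acyclic) (α ω : Finset V) (m : ℕ) :
    (∑ ρ : {l : List (Finset V × Finset V) // l.Nodup},
        if ρ.1.length = m + 1 then pathTerm C S α ω ρ.1 else 0)
      = ∑ f : Fin (m + 1) → (Finset V × Finset V), pathTerm C S α ω (List.ofFn f) := by
  classical
  have hL : (∑ ρ : {l : List (Finset V × Finset V) // l.Nodup},
        if ρ.1.length = m + 1 then pathTerm C S α ω ρ.1 else 0)
      = ∑ ρ ∈ Finset.univ.filter
          (fun ρ : {l : List (Finset V × Finset V) // l.Nodup} =>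
            ρ.1.length = m + 1 ∧ IsSigmaPath S ρ.1), pathTerm C S α ω ρ.1 := by
    rw [← Finset.sum_filter]
    symm
    apply Finset.sum_subset
    · intro ρ hρ
      rw [Finset.mem_filter] at hρ ⊢
      exact ⟨hρ.1, hρ.2.1⟩
    · intro ρ hρmem hρ
      rw [Finset.mem_filter] at hρmem hρ
      exact dif_neg (fun hsp => hρ ⟨hρmem.1, hρmem.2, hsp⟩)
  have hR : (∑ f : Fin (m + 1) → (Finset V × Finset V), pathTerm C S α ω (List.ofFn f))
      = ∑ f ∈ Finset.univ.filter
          (fun f : Fin (m + 1) → (Finset V × Finset V) => IsSigmaPath S (List.ofFn f)),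
            pathTerm C S α ω (List.ofFn f) := by
    symm
    apply Finset.sum_subset (Finset.filter_subset _ _)
    intro f _ hf
    rw [Finset.mem_filter] at hf
    exact dif_neg (fun hsp => hf ⟨Finset.mem_univ _, hsp⟩)
  rw [hL, hR]
  have key : ∀ (ρ : {l : List (Finset V × Finset V) // l.Nodup})
      (hlen : ρ.1.length = m + 1),
      List.ofFn (fun k : Fin (m + 1) => ρ.1.get ⟨k.1, by omega⟩) = ρ.1 := by
    intro ρ hlen
    apply List.ext_getElem
    · rw [List.length_ofFn, hlen]
    · intro n h1 h2
      rw [List.getElem_ofFn]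
      rw [List.get_eq_getElem]
  refine Finset.sum_bij'
    (fun (ρ : {l : List (Finset V × Finset V) // l.Nodup}) hρ => fun k : Fin (m + 1) =>
      ρ.1.get ⟨k.1, by
        have := (Finset.mem_filter.mp hρ).2.1
        omega⟩)
    (fun f hf => ⟨List.ofFn f, sigmaPath_nodup hacyc (Finset.mem_filter.mp hf).2⟩)
    ?_ ?_ ?_ ?_ ?_
  · intro ρ hρ
    rw [Finset.mem_filter]
    refine ⟨Finset.mem_univ _, ?_⟩
    rw [key ρ (Finset.mem_filter.mp hρ).2.1]
    exact (Finset.mem_filter.mp hρ).2.2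
  · intro f hf
    rw [Finset.mem_filter]
    exact ⟨Finset.mem_univ _, by simp, (Finset.mem_filter.mp hf).2⟩
  · intro ρ hρ
    exact Subtype.ext (key ρ (Finset.mem_filter.mp hρ).2.1)
  · intro f hf
    funext k
    simp only [List.get_ofFn]
    exact congrArg f (Fin.ext rfl)
  · intro ρ hρ
    rw [key ρ (Finset.mem_filter.mp hρ).2.1]

lemma sum_paths (hacyc : S.Acyclic) (α ω : Finset V) :
    (∑ ρ : {l : List (Finset V × Finset V) // l.Nodup}, pathTerm C S α ω ρ.1)
      = ∑ m ∈ Finset.range (S.pairs.card + 1),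
          ∑ f : Fin (m + 1) → (Finset V × Finset V), pathTerm C S α ω (List.ofFn f) := by
  rw [Finset.sum_congr rfl (fun ρ _ => pathTerm_split hacyc α ω ρ)]
  rw [Finset.sum_comm]
  exact Finset.sum_congr rfl (fun m _ => sum_fixed_len hacyc α ω m)

lemma morseBlock_eq_blk (hacyc : S.Acyclic) (hcomp : S.Compatible C) (α ω : Finset V) :
    morseBlock C S α ω = blk C (Dp C S) α ω := by
  have hphi : Dg C * Phi C S * Dg C = ∑ m ∈ Finset.range (S.pairs.card + 1), Xm C S m := by
    rw [Phi, Psi, Finset.mul_sum, Finset.mul_sum, Finset.sum_mul]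
    exact Finset.sum_congr rfl fun m _ => rfl
  rw [morseBlock_eq, sum_paths hacyc α ω, Dp, blk_add, hphi, blk_sum]
  congr 1
  · exact (blk_glob (dB C) α ω).symm
  · exact Finset.sum_congr rfl fun m _ => (blk_Xm hcomp m α ω).symm

lemma morseBlock_vanish {a b : Finset V} (ha : a ∈ K.simplices) (ha2 : 2 ≤ a.card)
    (hb : ¬ (b ∈ K.simplices ∧ b.card + 1 = a.card)) : morseBlock C S a b = 0 := by
  rw [morseBlock_eq]
  have h1 : dB C a b = 0 := by
    rw [dB]
    by_cases hz : incidence F a b = 0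
    · rw [hz, zero_smul]
    · exfalso
      obtain ⟨hsub, hcard⟩ := incidence_ne_zero hz
      have hbne : b.Nonempty := Finset.card_pos.mp (by omega)
      exact hb ⟨K.down_closed a ha b hbne hsub, by omega⟩
  rw [h1, zero_add]
  apply Finset.sum_eq_zero
  intro ρ _
  rw [pathTerm]
  split
  · rename_i hsp
    have hscal : pathSign F ρ.1 * incidence F a (ρ.1.head hsp.1).1 *
        incidence F (ρ.1.getLast hsp.1).2 b = 0 := by
      by_cases hz1 : incidence F a (ρ.1.head hsp.1).1 = 0
      · rw [hz1]
        ring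
      by_cases hz2 : incidence F (ρ.1.getLast hsp.1).2 b = 0
      · rw [hz2]
        ring
      exfalso
      obtain ⟨hsub1, hcard1⟩ := incidence_ne_zero hz1
      obtain ⟨hsub2, hcard2⟩ := incidence_ne_zero hz2
      have hlast_mem : ρ.1.getLast hsp.1 ∈ S.pairs :=
        hsp.2.1 _ (List.getLast_mem hsp.1)
      have hKτ : (ρ.1.getLast hsp.1).2 ∈ K.simplices := S.mem_snd _ hlast_mem
      have hcards := sigmaPath_card hsp hsp.1
      have hbne : b.Nonempty := Finset.card_pos.mp (by omega)
      exact hb ⟨K.down_closed _ hKτ b hbne hsub2, by omega⟩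
    rw [hscal, zero_smul]
  · rfl

lemma key_block (hacyc : S.Acyclic) (hcomp : S.Compatible C) (k : ℕ) (α γ : Finset V)
    (hαK : α ∈ K.simplices) (hcard : α.card = k + 3) :
    ∑ β : critIdx S (k + 1), (morseBlock C S β.1 γ).comp (morseBlock C S α β.1) = 0 := by
  have h0 : blk C (Dp C S * Ap C S * Dp C S) α γ = 0 := by
    rw [Dp_Ap_Dp hacyc hcomp, blk_zero]
  rw [blk_mul] at h0
  rw [Finset.sum_congr rfl (fun β (_ : β ∈ Finset.univ) => by
    rw [show blk C (Dp C S * Ap C S) β γ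
      = if S.Critical β then blk C (Dp C S) β γ else 0 from by rw [Ap, blk_mul_proj]])] at h0
  have h1 : ∀ β : Finset V,
      (if S.Critical β then blk C (Dp C S) β γ else 0).comp (blk C (Dp C S) α β)
        = if (β ∈ K.simplices ∧ β.card = k + 1 + 1) ∧ S.Critical β then
            (morseBlock C S β γ).comp (morseBlock C S α β) else 0 := by
    intro β
    rw [← morseBlock_eq_blk hacyc hcomp, ← morseBlock_eq_blk hacyc hcomp]
    by_cases hcrit : S.Critical β
    · rw [if_pos hcrit]
      by_cases hP : β ∈ K.simplices ∧ β.card = k + 1 + 1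
      · rw [if_pos ⟨hP, hcrit⟩]
      · rw [if_neg (fun hc => hP hc.1)]
        have hv : morseBlock C S α β = 0 := by
          apply morseBlock_vanish hαK (by omega)
          rintro ⟨hbK, hbc⟩
          exact hP ⟨hbK, by omega⟩
        rw [hv, LinearMap.comp_zero]
    · rw [if_neg hcrit, if_neg (fun hc => hcrit hc.2), LinearMap.zero_comp]
  rw [Finset.sum_congr rfl (fun β _ => h1 β)] at h0
  rw [← Finset.sum_filter] at h0
  rw [← h0]
  exact (Finset.sum_subtype
    (Finset.univ.filter (fun a => (a ∈ K.simplices ∧ a.card = k + 1 + 1) ∧ S.Critical a))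
    (fun β => by
      rw [Finset.mem_filter]
      exact ⟨fun h => h.2, fun h => ⟨Finset.mem_univ _, h⟩⟩)
    (fun β => (morseBlock C S β γ).comp (morseBlock C S α β))).symm

end Bridge


end MorseDev

/-- Let `Σ` be an acyclic partial matching on a finite simplicial
complex `K`, compatible with a cosheaf `𝒞` (each matched extension map `C_{τ▷σ}` is
an isomorphism).  Then the Morse boundary maps satisfy `∂^Σ_k ∘ ∂^Σ_{k+1} = 0`, so
the Morse complex `C^Σ_•(K;𝒞) = ⊕_{α critical} 𝒞_α` is a chain complex. -/
theorem morseBoundary_sq_zero {K : SimpComplex V} (C : Cosheaf F V) (S : Matching K)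
    (hacyc : S.Acyclic) (hcomp : S.Compatible C) (k : ℕ) :
    (morseBoundary C S k).comp (morseBoundary C S (k + 1)) = 0 := by
  apply DirectSum.linearMap_ext
  intro α
  ext x : 1
  simp only [LinearMap.comp_apply, LinearMap.zero_comp, LinearMap.zero_apply]
  have h1 : morseBoundary C S (k + 1)
        ((lof F (critIdx S (k + 1 + 1)) (fun σ => C.stalk σ.1) α) x)
      = ∑ β : critIdx S (k + 1), (lof F (critIdx S (k + 1)) (fun ω' => C.stalk ω'.1) β)
          (morseBlock C S α.1 β.1 x) := by
    rw [morseBoundary, DirectSum.toModule_lof, LinearMap.sum_apply]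
    exact Finset.sum_congr rfl fun β _ => rfl
  rw [h1, map_sum]
  have h2 : ∀ β : critIdx S (k + 1),
      morseBoundary C S k ((lof F (critIdx S (k + 1)) (fun ω' => C.stalk ω'.1) β)
        (morseBlock C S α.1 β.1 x))
      = ∑ γ : critIdx S k, (lof F (critIdx S k) (fun ω' => C.stalk ω'.1) γ)
          (morseBlock C S β.1 γ.1 (morseBlock C S α.1 β.1 x)) := by
    intro β
    rw [morseBoundary, DirectSum.toModule_lof, LinearMap.sum_apply]
    exact Finset.sum_congr rfl fun γ _ => rfl
  rw [Finset.sum_congr rfl (fun β _ => h2 β)]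
  rw [Finset.sum_comm]
  apply Finset.sum_eq_zero
  intro γ _
  rw [← map_sum]
  have hz := MorseDev.key_block hacyc hcomp k α.1 γ.1 α.2.1.1 (by
    have := α.2.1.2
    omega)
  have h3 : ∑ β : critIdx S (k + 1), morseBlock C S β.1 γ.1 (morseBlock C S α.1 β.1 x)
      = 0 := by
    have happ := congrArg (fun (m : C.stalk α.1 →ₗ[F] C.stalk γ.1) => m x) hz
    simpa using happ
  rw [h3, map_zero]

end
end

section
/- In the special case of an acyclic partial matching Σ = {(σ◁τ)} consisting of a single matched pair on a finite simplicial complex K with C-compatible cosheaf C, the Morse complex on the critical simplices K∖{σ,τ}, with boundary blocks [α:ω]_Σ = [α:ω]·C_{α▷ω} − [τ:ω]·[τ:σ]·[α:σ]·C_{τ▷ω}∘C^{-1}_{τ▷σ}∘C_{α▷σ}, is a chain complex (the composition of consecutive Morse boundary maps vanishes). -/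
open Classical DirectSum

noncomputable section

variable {V : Type} [Fintype V] [LinearOrder V] {F : Type} [Field F]

/-- The Morse boundary block for the single matched pair `σ ◁ τ`:
`[α:ω]_Σ = [α:ω]·C_{α▷ω} − [τ:ω]·[τ:σ]·[α:σ]·C_{τ▷ω} ∘ C⁻¹_{τ▷σ} ∘ C_{α▷σ}`. -/
noncomputable def singleMorseBlock (C : Cosheaf F V) (σ τ α ω : Finset V) :
    C.stalk α →ₗ[F] C.stalk ω :=
  incidence F α ω • C.extMap α ω -
    (incidence F τ ω * incidence F τ σ * incidence F α σ) •
      ((C.extMap τ ω).comp ((C.invExt τ σ).comp (C.extMap α σ)))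

/-- The `k`-simplices of `K` other than `σ` and `τ` (the critical simplices of the
single-pair matching `{(σ,τ)}`). -/
abbrev sCritIdx (K : SimpComplex V) (σ τ : Finset V) (k : ℕ) : Type :=
  {ξ : Finset V // (ξ ∈ K.simplices ∧ ξ.card = k + 1) ∧ ξ ≠ σ ∧ ξ ≠ τ}

noncomputable instance (K : SimpComplex V) (σ τ : Finset V) (k : ℕ) :
    Fintype (sCritIdx K σ τ k) := Fintype.ofFinite _

/-- The Morse boundary for the single matched pair `σ ◁ τ`, on
`⊕_{ξ ∈ K_k, ξ ∉ {σ,τ}} 𝒞_ξ`. -/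
noncomputable def singleMorseBoundary (C : Cosheaf F V) (K : SimpComplex V)
    (σ τ : Finset V) (k : ℕ) :
    (⨁ ξ : sCritIdx K σ τ (k + 1), C.stalk ξ.1) →ₗ[F]
      (⨁ ξ : sCritIdx K σ τ k, C.stalk ξ.1) :=
  DirectSum.toModule F _ _ fun α =>
    ∑ ω : sCritIdx K σ τ k,
      (DirectSum.lof F (sCritIdx K σ τ k) (fun ω' => C.stalk ω'.1) ω).comp
        (singleMorseBlock C σ τ α.1 ω.1)

/-! ### Auxiliary lemmas for the proof -/

section AuxIncidence

variable {V : Type} [Fintype V] [LinearOrder V] {F : Type} [Field F]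

omit [Fintype V] in
lemma inc_ne_zero {a b : Finset V} (h : incidence F a b ≠ 0) :
    b ⊆ a ∧ a.card = b.card + 1 := by
  by_contra hc
  exact h (if_neg hc)

omit [Fintype V] in
lemma inc_self (a : Finset V) : incidence F a a = 0 :=
  if_neg (fun h => by omega)

omit [Fintype V] in
lemma inc_eq_pow {b c : Finset V} (hsub : c ⊆ b) (hcard : b.card = c.card + 1)
    {v : V} (hv : b \ c = {v}) :
    incidence F b c = (-1) ^ ((b.filter (fun w => w < v)).card) := by
  rw [incidence, if_pos ⟨hsub, hcard⟩, hv, Finset.sum_singleton]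

omit [Fintype V] in
lemma inc_sq {b c : Finset V} (hsub : c ⊆ b) (hcard : b.card = c.card + 1) :
    incidence F b c * incidence F b c = 1 := by
  have h1 : (b \ c).card = 1 := by rw [Finset.card_sdiff_of_subset hsub]; omega
  obtain ⟨v, hv⟩ := Finset.card_eq_one.mp h1
  rw [inc_eq_pow hsub hcard hv, ← pow_add]
  exact Even.neg_one_pow ⟨_, rfl⟩

omit [Fintype V] in
lemma key_sum (a c : Finset V) :
    ∑ b ∈ a.powerset, incidence F a b * incidence F b c = 0 := by
  by_cases h : c ⊆ a ∧ a.card = c.card + 2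
  case neg =>
    refine Finset.sum_eq_zero fun b _ => ?_
    rcases eq_or_ne (incidence F a b) (0:F) with h1 | h1
    · rw [h1, zero_mul]
    rcases eq_or_ne (incidence F b c) (0:F) with h2 | h2
    · rw [h2, mul_zero]
    obtain ⟨hba, hc1⟩ := inc_ne_zero h1
    obtain ⟨hcb, hc2⟩ := inc_ne_zero h2
    exact absurd ⟨hcb.trans hba, by omega⟩ h
  case pos =>
    obtain ⟨hca, hcard⟩ := h
    have h2 : (a \ c).card = 2 := by rw [Finset.card_sdiff_of_subset hca]; omega
    obtain ⟨u, v, huv, hpair⟩ := Finset.card_eq_two.mp h2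
    wlog hlt : u < v generalizing u v
    · exact this v u huv.symm (by rw [hpair, Finset.pair_comm])
        (huv.lt_or_gt.resolve_left hlt)
    have hu : u ∈ a \ c := by rw [hpair]; simp
    have hv : v ∈ a \ c := by rw [hpair]; simp
    rw [Finset.mem_sdiff] at hu hv
    rw [← Finset.sum_subset (s₁ := {a.erase v, a.erase u})
        (by
          intro b hb
          simp only [Finset.mem_insert, Finset.mem_singleton] at hb
          rcases hb with rfl | rfl <;> exact Finset.mem_powerset.mpr (Finset.erase_subset _ _))
        (by
          intro b hb hnb
          by_contra hne
          have h1 : incidence F a b ≠ 0 := fun h => hne (by rw [h, zero_mul])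
          have h2 : incidence F b c ≠ 0 := fun h => hne (by rw [h, mul_zero])
          obtain ⟨hba, hc1⟩ := inc_ne_zero h1
          obtain ⟨hcb, hc2⟩ := inc_ne_zero h2
          have hd1 : (a \ b).card = 1 := by rw [Finset.card_sdiff_of_subset hba]; omega
          obtain ⟨w, hw⟩ := Finset.card_eq_one.mp hd1
          have hb' : b = a.erase w := by
            rw [Finset.erase_eq, ← hw, Finset.sdiff_sdiff_self_left,
              Finset.inter_eq_right.mpr hba]
          have hwmem : w ∈ a \ c := by
            have hwa : w ∈ a \ b := by rw [hw]; simp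
            rw [Finset.mem_sdiff] at hwa ⊢
            exact ⟨hwa.1, fun hc => hwa.2 (hcb hc)⟩
          rw [hpair, Finset.mem_insert, Finset.mem_singleton] at hwmem
          rcases hwmem with rfl | rfl
          · exact hnb (by simp [hb'])
          · exact hnb (by simp [hb']))]
    have hne : a.erase v ≠ a.erase u := by
      intro h
      have : u ∈ a.erase v := Finset.mem_erase.mpr ⟨huv, hu.1⟩
      rw [h] at this
      exact (Finset.mem_erase.mp this).1 rfl
    rw [Finset.sum_pair hne]
    have hcav : c ⊆ a.erase v := fun x hx =>
      Finset.mem_erase.mpr ⟨fun h => hv.2 (h ▸ hx), hca hx⟩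
    have hcau : c ⊆ a.erase u := fun x hx =>
      Finset.mem_erase.mpr ⟨fun h => hu.2 (h ▸ hx), hca hx⟩
    have hcv : (a.erase v).card = c.card + 1 := by
      rw [Finset.card_erase_of_mem hv.1]; omega
    have hcu : (a.erase u).card = c.card + 1 := by
      rw [Finset.card_erase_of_mem hu.1]; omega
    have hsd1 : a \ a.erase v = {v} := by
      rw [Finset.erase_eq, Finset.sdiff_sdiff_self_left,
        Finset.inter_singleton_of_mem hv.1]
    have hsd2 : a \ a.erase u = {u} := by
      rw [Finset.erase_eq, Finset.sdiff_sdiff_self_left,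
        Finset.inter_singleton_of_mem hu.1]
    have hsd3 : a.erase v \ c = {u} := by
      rw [Finset.erase_eq, sdiff_right_comm, hpair, Finset.pair_comm,
        Finset.insert_sdiff_of_mem _ (by simp : v ∈ ({v} : Finset V))]
      rw [Finset.sdiff_singleton_eq_erase, Finset.erase_eq_of_notMem (by simp [huv.symm])]
    have hsd4 : a.erase u \ c = {v} := by
      rw [Finset.erase_eq, sdiff_right_comm, hpair,
        Finset.insert_sdiff_of_mem _ (by simp : u ∈ ({u} : Finset V))]
      rw [Finset.sdiff_singleton_eq_erase, Finset.erase_eq_of_notMem (by simp [huv])]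
    have hs1 : a.erase v ⊆ a := Finset.erase_subset _ _
    have hs2 : a.erase u ⊆ a := Finset.erase_subset _ _
    have hca1 : a.card = (a.erase v).card + 1 := by omega
    have hca2 : a.card = (a.erase u).card + 1 := by omega
    rw [inc_eq_pow hs1 hca1 hsd1, inc_eq_pow hs2 hca2 hsd2,
      inc_eq_pow hcav hcv hsd3, inc_eq_pow hcau hcu hsd4]
    have hp1 : ((a.erase v).filter (fun w => w < u)).card
        = (a.filter (fun w => w < u)).card := by
      rw [Finset.filter_erase, Finset.erase_eq_of_notMem]
      simp only [Finset.mem_filter, not_and]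
      intro _
      exact not_lt.mpr hlt.le
    have humem : u ∈ a.filter (fun w => w < v) := Finset.mem_filter.mpr ⟨hu.1, hlt⟩
    have hp2 : ((a.erase u).filter (fun w => w < v)).card + 1
        = (a.filter (fun w => w < v)).card := by
      rw [Finset.filter_erase, Finset.card_erase_of_mem humem]
      have : 0 < (a.filter (fun w => w < v)).card := Finset.card_pos.mpr ⟨u, humem⟩
      omega
    rw [hp1, ← hp2]
    ring

omit [Fintype V] in
lemma extMap_comp (C : Cosheaf F V) {a b c : Finset V} (h1 : b ⊆ a) (h2 : c ⊆ b) :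
    (C.extMap b c).comp (C.extMap a b) = C.extMap a c := by
  rw [Cosheaf.extMap, Cosheaf.extMap, Cosheaf.extMap, dif_pos h1, dif_pos h2,
    dif_pos (h2.trans h1), C.ext_comp]

omit [Fintype V] in
lemma extMap_comp_invExt (C : Cosheaf F V) {a b : Finset V}
    (h : Function.Bijective (C.extMap a b)) :
    (C.extMap a b).comp (C.invExt a b) = LinearMap.id := by
  rw [Cosheaf.invExt, dif_pos h]
  ext x
  exact (LinearEquiv.ofBijective (C.extMap a b) h).apply_symm_apply x

omit [Fintype V] in
lemma invExt_comp_extMap (C : Cosheaf F V) {a b : Finset V}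
    (h : Function.Bijective (C.extMap a b)) :
    (C.invExt a b).comp (C.extMap a b) = LinearMap.id := by
  rw [Cosheaf.invExt, dif_pos h]
  ext x
  exact (LinearEquiv.ofBijective (C.extMap a b) h).symm_apply_apply x

lemma sum_crit {K : SimpComplex V} {σ τ : Finset V} (hστ : σ ≠ τ) {k : ℕ}
    {a : Finset V} (ha : a ∈ K.simplices)
    (g : Finset V → F) (hg : ∀ b, g b ≠ 0 → b ⊆ a ∧ b.card = k + 2) :
    ∑ β : sCritIdx K σ τ (k + 1), g β.1 = (∑ b ∈ a.powerset, g b) - g σ - g τ := by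
  classical
  set s : Finset (Finset V) :=
    K.simplices.filter (fun ξ => (ξ ∈ K.simplices ∧ ξ.card = k + 1 + 1) ∧ ξ ≠ σ ∧ ξ ≠ τ)
    with hs
  have hiff : ∀ x : Finset V, x ∈ s ↔
      ((x ∈ K.simplices ∧ x.card = k + 1 + 1) ∧ x ≠ σ ∧ x ≠ τ) := by
    intro x
    simp only [hs, Finset.mem_filter]
    tauto
  have h1 : ∑ β : sCritIdx K σ τ (k + 1), g β.1 = ∑ b ∈ s, g b :=
    (Finset.sum_subtype s hiff g).symm
  have hσs : σ ∉ s := by simp [hs]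
  have hτs : τ ∉ s := by simp [hs]
  have h2 : ∑ b ∈ insert σ (insert τ s), g b = g σ + (g τ + ∑ b ∈ s, g b) := by
    rw [Finset.sum_insert (by simp [Finset.mem_insert, hστ, hσs]),
      Finset.sum_insert hτs]
  have h3 : ∑ b ∈ insert σ (insert τ s), g b = ∑ b ∈ a.powerset, g b := by
    rw [← Finset.sum_filter_ne_zero (insert σ (insert τ s)),
      ← Finset.sum_filter_ne_zero a.powerset]
    congr 1
    ext b
    simp only [Finset.mem_filter, Finset.mem_insert, Finset.mem_powerset, hs]
    constructor
    · rintro ⟨_, hb0⟩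
      exact ⟨(hg b hb0).1, hb0⟩
    · rintro ⟨hba, hb0⟩
      refine ⟨?_, hb0⟩
      by_cases hbσ : b = σ
      · exact Or.inl hbσ
      refine Or.inr ?_
      by_cases hbτ : b = τ
      · exact Or.inl hbτ
      refine Or.inr ?_
      obtain ⟨hsub, hcard⟩ := hg b hb0
      have hbK : b ∈ K.simplices :=
        K.down_closed a ha b (Finset.card_pos.mp (by omega)) hsub
      exact ⟨hbK, ⟨⟨hbK, by omega⟩, hbσ, hbτ⟩⟩
  rw [h1, ← h3, h2]
  ring

end AuxIncidence

section BlockLemma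

variable {V : Type} [Fintype V] [LinearOrder V] {F : Type} [Field F]

lemma block_sum_zero (C : Cosheaf F V) (K : SimpComplex V) (σ τ : Finset V)
    (hτ : τ ∈ K.simplices) (hfacet : σ ⊆ τ ∧ τ.card = σ.card + 1)
    (hbij : Function.Bijective (C.extMap τ σ)) (k : ℕ)
    (α : Finset V) (hα : α ∈ K.simplices) (hαc : α.card = k + 3)
    (ω : Finset V) (hωc : ω.card = k + 1) :
    ∑ β : sCritIdx K σ τ (k + 1),
      (singleMorseBlock C σ τ β.1 ω).comp (singleMorseBlock C σ τ α β.1) = 0 := by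
  have hστ : σ ≠ τ := fun h => by rw [h] at hfacet; omega
  set M : C.stalk α →ₗ[F] C.stalk ω :=
    (C.extMap τ ω).comp ((C.invExt τ σ).comp (C.extMap α σ)) with hM
  -- the Morse correction path `M` agrees with the direct map when the relevant
  -- incidence numbers are nonzero
  have hR5 : (incidence F α τ * incidence F τ ω) • M
      = (incidence F α τ * incidence F τ ω) • C.extMap α ω := by
    rcases eq_or_ne (incidence F α τ) (0:F) with h1 | h1
    · rw [h1, zero_mul, zero_smul, zero_smul]
    rcases eq_or_ne (incidence F τ ω) (0:F) with h2 | h2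
    · rw [h2, mul_zero, zero_smul, zero_smul]
    have hτα := (inc_ne_zero h1).1
    have hωτ := (inc_ne_zero h2).1
    congr 1
    rw [hM, ← extMap_comp C hτα hfacet.1,
      ← LinearMap.comp_assoc (C.extMap α τ) (C.extMap τ σ) (C.invExt τ σ),
      invExt_comp_extMap C hbij, LinearMap.id_comp, extMap_comp C hτα hωτ]
  have hR6 : (incidence F α σ * incidence F σ ω) • M
      = (incidence F α σ * incidence F σ ω) • C.extMap α ω := by
    rcases eq_or_ne (incidence F α σ) (0:F) with h1 | h1
    · rw [h1, zero_mul, zero_smul, zero_smul]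
    rcases eq_or_ne (incidence F σ ω) (0:F) with h2 | h2
    · rw [h2, mul_zero, zero_smul, zero_smul]
    have hσα := (inc_ne_zero h1).1
    have hωσ := (inc_ne_zero h2).1
    congr 1
    rw [hM, ← extMap_comp C hfacet.1 hωσ, LinearMap.comp_assoc,
      ← LinearMap.comp_assoc (C.extMap α σ) (C.invExt τ σ) (C.extMap τ σ),
      extMap_comp_invExt C hbij, LinearMap.id_comp, extMap_comp C hσα hωσ]
  have hsq : incidence F τ σ * incidence F τ σ = 1 := inc_sq hfacet.1 hfacet.2
  have hsummand : ∀ β : sCritIdx K σ τ (k + 1),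
      (singleMorseBlock C σ τ β.1 ω).comp (singleMorseBlock C σ τ α β.1) =
        (incidence F α β.1 * incidence F β.1 ω) • C.extMap α ω
        - ((incidence F τ β.1 * incidence F β.1 ω) *
            (incidence F τ σ * incidence F α σ)) • M
        - ((incidence F α β.1 * incidence F β.1 σ) *
            (incidence F τ ω * incidence F τ σ)) • M := by
    intro β
    obtain ⟨b, ⟨⟨hbK, hbc⟩, hbσ, hbτ⟩⟩ := β
    simp only [singleMorseBlock]
    rw [LinearMap.sub_comp, LinearMap.comp_sub, LinearMap.comp_sub]
    simp only [LinearMap.smul_comp, LinearMap.comp_smul, smul_smul]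
    have hT1 : (incidence F b ω * incidence F α b) •
        ((C.extMap b ω).comp (C.extMap α b)) =
        (incidence F α b * incidence F b ω) • C.extMap α ω := by
      rcases eq_or_ne (incidence F α b) (0:F) with h1 | h1
      · rw [h1]; simp
      rcases eq_or_ne (incidence F b ω) (0:F) with h2 | h2
      · rw [h2]; simp
      rw [extMap_comp C (inc_ne_zero h1).1 (inc_ne_zero h2).1, mul_comm]
    have hT2 : (incidence F b ω * (incidence F τ b * incidence F τ σ * incidence F α σ)) •
        ((C.extMap b ω).comp ((C.extMap τ b).comp
          ((C.invExt τ σ).comp (C.extMap α σ)))) =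
        ((incidence F τ b * incidence F b ω) *
          (incidence F τ σ * incidence F α σ)) • M := by
      rcases eq_or_ne (incidence F τ b) (0:F) with h1 | h1
      · rw [h1]; simp
      rcases eq_or_ne (incidence F b ω) (0:F) with h2 | h2
      · rw [h2]; simp
      rw [← LinearMap.comp_assoc, extMap_comp C (inc_ne_zero h1).1 (inc_ne_zero h2).1]
      rw [hM]
      ring_nf
    have hT3 : ((incidence F τ ω * incidence F τ σ * incidence F b σ) * incidence F α b) •
        (((C.extMap τ ω).comp ((C.invExt τ σ).comp (C.extMap b σ))).comp
          (C.extMap α b)) =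
        ((incidence F α b * incidence F b σ) *
          (incidence F τ ω * incidence F τ σ)) • M := by
      rcases eq_or_ne (incidence F α b) (0:F) with h1 | h1
      · rw [h1]; simp
      rcases eq_or_ne (incidence F b σ) (0:F) with h2 | h2
      · rw [h2]; simp
      rw [LinearMap.comp_assoc, LinearMap.comp_assoc,
        extMap_comp C (inc_ne_zero h1).1 (inc_ne_zero h2).1]
      rw [hM]
      ring_nf
    have hT4 : (incidence F τ ω * incidence F τ σ * incidence F b σ *
        (incidence F τ b * incidence F τ σ * incidence F α σ)) = (0:F) := by
      rcases eq_or_ne (incidence F τ b) (0:F) with h1 | h1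
      · rw [h1]; ring
      have hcb := (inc_ne_zero h1).2
      have : incidence F τ ω = 0 := if_neg (fun hh => by omega)
      rw [this]; ring
    linear_combination (norm := module) hT1 - hT2 - hT3 +
      hT4 • ((C.extMap τ ω ∘ₗ C.invExt τ σ ∘ₗ C.extMap b σ) ∘ₗ
        (C.extMap τ b ∘ₗ C.invExt τ σ ∘ₗ C.extMap α σ))
  rw [Finset.sum_congr rfl (fun β _ => hsummand β), Finset.sum_sub_distrib,
    Finset.sum_sub_distrib, ← Finset.sum_smul, ← Finset.sum_smul, ← Finset.sum_smul]
  have hS1 : (∑ β : sCritIdx K σ τ (k + 1),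
      incidence F α β.1 * incidence F β.1 ω) =
      -(incidence F α σ * incidence F σ ω) - incidence F α τ * incidence F τ ω := by
    rw [sum_crit hστ hα (fun b => incidence F α b * incidence F b ω)
      (fun b hb => by
        have h1 : incidence F α b ≠ 0 := fun h => hb (by simp [h])
        obtain ⟨hsub, hcard⟩ := inc_ne_zero h1
        exact ⟨hsub, by omega⟩), key_sum]
    ring
  have hS2 : (∑ β : sCritIdx K σ τ (k + 1),
      (incidence F τ β.1 * incidence F β.1 ω) *
        (incidence F τ σ * incidence F α σ)) =
      (-(incidence F τ σ * incidence F σ ω)) * (incidence F τ σ * incidence F α σ) := by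
    rw [← Finset.sum_mul]
    congr 1
    rw [sum_crit hστ hτ (fun b => incidence F τ b * incidence F b ω)
      (fun b hb => by
        have h1 : incidence F τ b ≠ 0 := fun h => hb (by simp [h])
        have h2 : incidence F b ω ≠ 0 := fun h => hb (by simp [h])
        obtain ⟨hsub, _⟩ := inc_ne_zero h1
        obtain ⟨_, hcard⟩ := inc_ne_zero h2
        exact ⟨hsub, by omega⟩), key_sum, inc_self]
    ring
  have hS3 : (∑ β : sCritIdx K σ τ (k + 1),
      (incidence F α β.1 * incidence F β.1 σ) *
        (incidence F τ ω * incidence F τ σ)) =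
      (-(incidence F α τ * incidence F τ σ)) * (incidence F τ ω * incidence F τ σ) := by
    rw [← Finset.sum_mul]
    congr 1
    rw [sum_crit hστ hα (fun b => incidence F α b * incidence F b σ)
      (fun b hb => by
        have h1 : incidence F α b ≠ 0 := fun h => hb (by simp [h])
        obtain ⟨hsub, hcard⟩ := inc_ne_zero h1
        exact ⟨hsub, by omega⟩), key_sum, inc_self]
    ring
  rw [hS1, hS2, hS3]
  have e2 : ((-(incidence F τ σ * incidence F σ ω)) *
      (incidence F τ σ * incidence F α σ)) • M =
      -((incidence F α σ * incidence F σ ω) • C.extMap α ω) := by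
    have h : (-(incidence F τ σ * incidence F σ ω)) *
        (incidence F τ σ * incidence F α σ) =
        -((incidence F τ σ * incidence F τ σ) *
          (incidence F α σ * incidence F σ ω)) := by ring
    rw [h, hsq, one_mul, neg_smul, hR6]
  have e3 : ((-(incidence F α τ * incidence F τ σ)) *
      (incidence F τ ω * incidence F τ σ)) • M =
      -((incidence F α τ * incidence F τ ω) • C.extMap α ω) := by
    have h : (-(incidence F α τ * incidence F τ σ)) *
        (incidence F τ ω * incidence F τ σ) =
        -((incidence F τ σ * incidence F τ σ) *
          (incidence F α τ * incidence F τ ω)) := by ring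
    rw [h, hsq, one_mul, neg_smul, hR5]
  rw [e2, e3]
  module

end BlockLemma


/-- For an acyclic partial matching consisting of a single matched
pair `σ ◁ τ` on a finite simplicial complex `K`, with `𝒞`-compatible cosheaf `𝒞`
(i.e. `C_{τ▷σ}` is an isomorphism), the Morse complex on the critical simplices
`K ∖ {σ,τ}` with the boundary blocks
`[α:ω]_Σ = [α:ω]·C_{α▷ω} − [τ:ω]·[τ:σ]·[α:σ]·C_{τ▷ω}∘C⁻¹_{τ▷σ}∘C_{α▷σ}`
is a chain complex: consecutive Morse boundary maps compose to zero. -/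
theorem singleMorseBoundary_sq_zero (C : Cosheaf F V) (K : SimpComplex V)
    (σ τ : Finset V) (hσ : σ ∈ K.simplices) (hτ : τ ∈ K.simplices)
    (hfacet : σ ⊆ τ ∧ τ.card = σ.card + 1)
    (hbij : Function.Bijective (C.extMap τ σ)) (k : ℕ) :
    (singleMorseBoundary C K σ τ k).comp (singleMorseBoundary C K σ τ (k + 1)) = 0 := by
  have hστ : σ ≠ τ := fun h => by rw [h] at hfacet; omega
  refine DirectSum.linearMap_ext F fun α => ?_
  refine LinearMap.ext fun x => ?_
  simp only [LinearMap.comp_apply, LinearMap.zero_comp, LinearMap.zero_apply]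
  simp only [singleMorseBoundary, DirectSum.toModule_lof, map_sum,
    LinearMap.sum_apply, LinearMap.comp_apply]
  rw [Finset.sum_comm]
  refine Finset.sum_eq_zero fun ω _ => ?_
  rw [← map_sum]
  have h0 := block_sum_zero C K σ τ hτ hfacet hbij k α.1 α.2.1.1
    (by have := α.2.1.2; omega) ω.1 ω.2.1.2
  have hz : (∑ β : sCritIdx K σ τ (k + 1),
      (singleMorseBlock C σ τ β.1 ω.1)
        ((singleMorseBlock C σ τ α.1 β.1) x)) = 0 := by
    have := congrArg (fun (f : _ →ₗ[F] _) => f x) h0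
    simpa [LinearMap.sum_apply] using this
  rw [hz, map_zero]

end
end

section
/- Let K be a finite simplicial complex with cosheaf C, M ⊆ K a subcomplex, and Σ a C-compatible acyclic partial matching on K compatible with M (for each (σ◁τ) ∈ Σ, σ ∈ M iff τ ∈ M). Then every Σ_M-critical simplex of M is Σ-critical in K, and there are no Σ-paths in K that start at a facet of a simplex of M and end at a simplex τ_m having a facet outside M followed by use in the Morse boundary; consequently the block [α:ω]_Σ vanishes for every critical α ∈ M and critical ω ∈ K∖M, so the inclusion of critical summands defines a chain map ι_•: M_•^M → M_•^K between the Morse complexes. -/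
open Classical DirectSum

noncomputable section

variable {V : Type} [Fintype V] [LinearOrder V] {F : Type} [Field F]

/-- The restriction `Σ_M` of a matching to a subcomplex `M`: the pairs both of
whose constituents lie in `M`. -/
noncomputable def Matching.restrict {K : SimpComplex V} (S : Matching K)
    (M : SimpComplex V) : Matching M where
  pairs := S.pairs.filter fun p => p.1 ∈ M.simplices ∧ p.2 ∈ M.simplices
  mem_fst p hp := ((Finset.mem_filter.mp hp).2).1
  mem_snd p hp := ((Finset.mem_filter.mp hp).2).2
  facet p hp := S.facet p (Finset.mem_filter.mp hp).1
  pairwise_distinct p hp q hq :=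
    S.pairwise_distinct p (Finset.mem_filter.mp hp).1 q (Finset.mem_filter.mp hq).1

lemma incidence_ne_zero_cond {σ τ : Finset V} (h : (incidence F σ τ) ≠ 0) :
    τ ⊆ σ ∧ σ.card = τ.card + 1 := by
  by_contra hc
  exact h (by rw [incidence, if_neg hc])

lemma sigmaPath_tail {K : SimpComplex V} (S : Matching K)
    {p q : Finset V × Finset V} {l : List (Finset V × Finset V)}
    (h : IsSigmaPath S (p :: q :: l)) : IsSigmaPath S (q :: l) := by
  obtain ⟨-, hmem, hch⟩ := h
  exact ⟨by simp, fun r hr => hmem r (List.mem_cons_of_mem p hr), hch.tail⟩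

lemma path_in_M {K M : SimpComplex V} (S : Matching K)
    (hcompat : ∀ p ∈ S.pairs, (p.1 ∈ M.simplices ↔ p.2 ∈ M.simplices)) :
    ∀ (l : List (Finset V × Finset V)), IsSigmaPath S l →
      ∀ h : l ≠ [], (l.head h).1 ∈ M.simplices →
        ∀ p ∈ l, p.1 ∈ M.simplices ∧ p.2 ∈ M.simplices := by
  intro l
  induction l with
  | nil => intro _ h; exact absurd rfl h
  | cons p l ih =>
    intro hpath h hhead q hq
    have hpmem : p ∈ S.pairs := hpath.2.1 p List.mem_cons_self
    have hp1 : p.1 ∈ M.simplices := hhead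
    have hp2 : p.2 ∈ M.simplices := (hcompat p hpmem).mp hp1
    rcases List.mem_cons.mp hq with rfl | hq'
    · exact ⟨hp1, hp2⟩
    · match l, hq' with
      | q' :: l', hq' =>
        have htail : IsSigmaPath S (q' :: l') := sigmaPath_tail S hpath
        have hrel : q'.1 ⊆ p.2 ∧ p.2.card = q'.1.card + 1 ∧ q'.1 ≠ p.1 :=
          (List.isChain_cons_cons.mp hpath.2.2).1
        have hq'mem : q' ∈ S.pairs := htail.2.1 q' List.mem_cons_self
        have hq'1K : q'.1 ∈ K.simplices := S.mem_fst q' hq'mem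
        have hq'1ne : q'.1.Nonempty := K.nonempty_mem _ hq'1K
        have hq'1M : q'.1 ∈ M.simplices := M.down_closed p.2 hp2 q'.1 hq'1ne hrel.1
        exact ih htail (by simp) hq'1M q hq'

lemma sigmaPath_restrict_of_head {K M : SimpComplex V} (S : Matching K)
    (hcompat : ∀ p ∈ S.pairs, (p.1 ∈ M.simplices ↔ p.2 ∈ M.simplices))
    {l : List (Finset V × Finset V)} (h : IsSigmaPath S l)
    (hhead : (l.head h.1).1 ∈ M.simplices) : IsSigmaPath (S.restrict M) l := by
  refine ⟨h.1, fun p hp => ?_, h.2.2⟩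
  have hM := path_in_M S hcompat l h h.1 hhead p hp
  exact Finset.mem_filter.mpr ⟨h.2.1 p hp, hM.1, hM.2⟩

lemma sigmaPath_of_restrict {K M : SimpComplex V} {S : Matching K}
    {l : List (Finset V × Finset V)} (h : IsSigmaPath (S.restrict M) l) :
    IsSigmaPath S l :=
  ⟨h.1, fun p hp => (Finset.mem_filter.mp (h.2.1 p hp)).1, h.2.2⟩

lemma crit_of_restrict_crit {K M : SimpComplex V} (S : Matching K)
    (hcompat : ∀ p ∈ S.pairs, (p.1 ∈ M.simplices ↔ p.2 ∈ M.simplices))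
    {σ : Finset V} (hσ : σ ∈ M.simplices) (hc : (S.restrict M).Critical σ) :
    S.Critical σ := by
  intro p hp
  constructor
  · rintro rfl
    have hp2 : p.2 ∈ M.simplices := (hcompat p hp).mp hσ
    exact ((hc p (Finset.mem_filter.mpr ⟨hp, hσ, hp2⟩)).1 rfl)
  · rintro rfl
    have hp1 : p.1 ∈ M.simplices := (hcompat p hp).mpr hσ
    exact ((hc p (Finset.mem_filter.mpr ⟨hp, hp1, hσ⟩)).2 rfl)

lemma restrict_crit_of_crit {K M : SimpComplex V} (S : Matching K)
    {σ : Finset V} (hc : S.Critical σ) : (S.restrict M).Critical σ :=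
  fun p hp => hc p (Finset.mem_filter.mp hp).1

lemma morseBlock_restrict_eq {K M : SimpComplex V} (C : Cosheaf F V) (S : Matching K)
    (hcompat : ∀ p ∈ S.pairs, (p.1 ∈ M.simplices ↔ p.2 ∈ M.simplices))
    {α : Finset V} (hα : α ∈ M.simplices) (ω : Finset V) :
    morseBlock C (S.restrict M) α ω = morseBlock C S α ω := by
  unfold morseBlock
  congr 1
  apply Finset.sum_congr rfl
  intro ρ _
  by_cases hres : IsSigmaPath (S.restrict M) ρ.1
  · rw [dif_pos hres, dif_pos (sigmaPath_of_restrict hres)]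
  · rw [dif_neg hres]
    by_cases hS : IsSigmaPath S ρ.1
    · rw [dif_pos hS]
      have hhead : (ρ.1.head hS.1).1 ∉ M.simplices := fun hm =>
        hres (sigmaPath_restrict_of_head S hcompat hS hm)
      have hinc : incidence F α (ρ.1.head hS.1).1 = 0 := by
        by_contra h
        have hsub := (incidence_ne_zero_cond h).1
        have hmem : (ρ.1.head hS.1) ∈ S.pairs := hS.2.1 _ (List.head_mem hS.1)
        have hne : (ρ.1.head hS.1).1.Nonempty :=
          K.nonempty_mem _ (S.mem_fst _ hmem)
        exact hhead (M.down_closed α hα _ hne hsub)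
      rw [hinc, mul_zero, zero_mul, zero_smul]
    · rw [dif_neg hS]

lemma morseBlock_zero_of_not_mem {K M : SimpComplex V} (C : Cosheaf F V)
    (S : Matching K)
    (hcompat : ∀ p ∈ S.pairs, (p.1 ∈ M.simplices ↔ p.2 ∈ M.simplices))
    {α ω : Finset V} (hα : α ∈ M.simplices) (hωK : ω ∈ K.simplices)
    (hω : ω ∉ M.simplices) : morseBlock C S α ω = 0 := by
  have hωne : ω.Nonempty := K.nonempty_mem ω hωK
  have hinc : ∀ τ : Finset V, τ ∈ M.simplices → incidence F τ ω = 0 := by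
    intro τ hτ
    by_contra h
    exact hω (M.down_closed τ hτ ω hωne (incidence_ne_zero_cond h).1)
  unfold morseBlock
  rw [hinc α hα, zero_smul, zero_add]
  apply Finset.sum_eq_zero
  intro ρ _
  by_cases hS : IsSigmaPath S ρ.1
  · rw [dif_pos hS]
    by_cases hh : (ρ.1.head hS.1).1 ∈ M.simplices
    · have hlast : (ρ.1.getLast hS.1) ∈ ρ.1 := List.getLast_mem hS.1
      have hl2 : (ρ.1.getLast hS.1).2 ∈ M.simplices :=
        (path_in_M S hcompat ρ.1 hS hS.1 hh _ hlast).2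
      rw [hinc _ hl2, mul_zero, zero_smul]
    · have hinc1 : incidence F α (ρ.1.head hS.1).1 = 0 := by
        by_contra h
        have hsub := (incidence_ne_zero_cond h).1
        have hmem : (ρ.1.head hS.1) ∈ S.pairs := hS.2.1 _ (List.head_mem hS.1)
        have hne : (ρ.1.head hS.1).1.Nonempty :=
          K.nonempty_mem _ (S.mem_fst _ hmem)
        exact hh (M.down_closed α hα _ hne hsub)
      rw [hinc1, mul_zero, zero_mul, zero_smul]
  · rw [dif_neg hS]

/-- Let `K` be a finite simplicial complex with cosheaf `𝒞`,
`M ⊆ K` a subcomplex, and `Σ` a `𝒞`-compatible acyclic partial matching on `K`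
compatible with `M` (for each `(σ◁τ) ∈ Σ`, `σ ∈ M ↔ τ ∈ M`).  Then every
`Σ_M`-critical simplex of `M` is `Σ`-critical in `K`; the Morse boundary block
`[α:ω]_Σ` vanishes for every critical `α ∈ M` and critical `ω ∈ K ∖ M`; and the
inclusion of critical summands defines a chain map `ι_• : M_•^M → M_•^K` between
the Morse complexes. -/
theorem morse_restriction_chainMap {K M : SimpComplex V} (C : Cosheaf F V)
    (S : Matching K) (hacyc : S.Acyclic) (hcomp : S.Compatible C)
    (hMK : M.Sub K)
    (hcompat : ∀ p ∈ S.pairs, (p.1 ∈ M.simplices ↔ p.2 ∈ M.simplices)) :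
    (∀ σ : Finset V, σ ∈ M.simplices → (S.restrict M).Critical σ → S.Critical σ) ∧
    (∀ α ω : Finset V, α ∈ M.simplices → S.Critical α →
      ω ∈ K.simplices → ω ∉ M.simplices → S.Critical ω →
        morseBlock C S α ω = 0) ∧
    (∃ ι : ∀ k : ℕ, MorseChain C (S.restrict M) k →ₗ[F] MorseChain C S k,
      (∀ (k : ℕ) (σ : critIdx (S.restrict M) k) (hc : S.Critical σ.1)
        (x : C.stalk σ.1),
          ι k (DirectSum.lof F (critIdx (S.restrict M) k)
            (fun ω => C.stalk ω.1) σ x) =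
          DirectSum.lof F (critIdx S k) (fun ω => C.stalk ω.1)
            ⟨σ.1, ⟨⟨hMK σ.2.1.1, σ.2.1.2⟩, hc⟩⟩ x) ∧
      (∀ k : ℕ, (morseBoundary C S k).comp (ι (k + 1)) =
        (ι k).comp (morseBoundary C (S.restrict M) k))) := by
  refine ⟨fun σ hσ hc => crit_of_restrict_crit S hcompat hσ hc,
    fun α ω hα _ hωK hω _ => morseBlock_zero_of_not_mem C S hcompat hα hωK hω, ?_⟩
  -- the embedding of critical index sets
  have eOK : ∀ (k : ℕ) (σ : critIdx (S.restrict M) k),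
      (σ.1 ∈ K.simplices ∧ σ.1.card = k + 1) ∧ S.Critical σ.1 := fun k σ =>
    ⟨⟨hMK σ.2.1.1, σ.2.1.2⟩, crit_of_restrict_crit S hcompat σ.2.1.1 σ.2.2⟩
  set e : ∀ k : ℕ, critIdx (S.restrict M) k → critIdx S k :=
    fun k σ => ⟨σ.1, eOK k σ⟩ with he
  have einj : ∀ k, Function.Injective (e k) := by
    intro k σ τ h
    have h2 : (e k σ).1 = (e k τ).1 := congrArg Subtype.val h
    exact Subtype.ext h2
  refine ⟨fun k => DirectSum.toModule F _ _ fun σ =>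
      DirectSum.lof F (critIdx S k) (fun ω => C.stalk ω.1) (e k σ), ?_, ?_⟩
  · intro k σ hc x
    rw [DirectSum.toModule_lof]
  · intro k
    apply DirectSum.linearMap_ext
    intro α
    apply LinearMap.ext
    intro x
    simp only [LinearMap.comp_apply, DirectSum.toModule_lof, morseBoundary,
      LinearMap.sum_apply, map_sum]
    -- RHS: sum over restricted critical indices; LHS: sum over all critical indices
    have key : ∀ ω' : critIdx (S.restrict M) (k : ℕ),
        morseBlock C (S.restrict M) α.1 ω'.1 = morseBlock C S α.1 ω'.1 :=
      fun ω' => morseBlock_restrict_eq C S hcompat α.2.1.1 ω'.1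
    trans (∑ ω' : critIdx (S.restrict M) k,
        DirectSum.lof F (critIdx S k) (fun ω => C.stalk ω.1) (e k ω')
          ((morseBlock C S α.1 ω'.1) x))
    · have vanish : ∀ ω ∈ Finset.univ, ω ∉ Finset.univ.image (e k) →
          DirectSum.lof F (critIdx S k) (fun ω' => C.stalk ω'.1) ω
            ((morseBlock C S α.1 ω.1) x) = 0 := by
        intro ω _ hω
        have hωM : ω.1 ∉ M.simplices := fun hm =>
          hω (Finset.mem_image.mpr ⟨⟨ω.1, ⟨⟨hm, ω.2.1.2⟩, restrict_crit_of_crit S ω.2.2⟩⟩,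
            Finset.mem_univ _, Subtype.ext rfl⟩)
        rw [morseBlock_zero_of_not_mem C S hcompat α.2.1.1 ω.2.1.1 hωM,
          LinearMap.zero_apply, map_zero]
      exact (Finset.sum_subset (Finset.subset_univ _) vanish).symm.trans
        (Finset.sum_image (g := e k) (f := fun ω : critIdx S k =>
          DirectSum.lof F (critIdx S k) (fun ω' => C.stalk ω'.1) ω
            ((morseBlock C S α.1 ω.1) x)) fun a _ b _ h => einj k h)
    · exact Finset.sum_congr rfl fun ω' _ => by rw [key ω']

end
end

section
/- Let K = L ∪ M with I = L ∩ M, C a cosheaf on K, and Σ an acyclic partial matching compatible with C and with both subcomplexes L and M. Then 0 → M_•^I → M_•^L ⊕ M_•^M → M_•^K → 0, with maps ι^{I,L}⊕ι^{I,M} and ι^{L,K}⊕(−ι^{M,K}) induced by inclusions of critical simplices, is a short exact sequence of chain complexes (the Morse Mayer–Vietoris sequence). -/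
open Classical DirectSum

noncomputable section

variable {V : Type} [Fintype V] [LinearOrder V] {F : Type} [Field F]

section Aux

lemma incidence_eq_zero {α σ : Finset V} (h : ¬(σ ⊆ α ∧ α.card = σ.card + 1)) :
    incidence F α σ = 0 := by
  simp only [incidence]; rw [if_neg h]

lemma mem_restrict_pairs {K N : SimpComplex V} {S : Matching K}
    {p : Finset V × Finset V} :
    p ∈ (S.restrict N).pairs ↔ p ∈ S.pairs ∧ p.1 ∈ N.simplices ∧ p.2 ∈ N.simplices := by
  simp [Matching.restrict]

/-- Auxiliary relation between two matchings on two complexes expressing that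
`S1` is the "localization" of `S2` to the subcomplex `K1` of `K2`. -/
structure Transfer {K1 K2 : SimpComplex V} (S1 : Matching K1) (S2 : Matching K2) : Prop where
  sub : S1.pairs ⊆ S2.pairs
  ksub : K1.Sub K2
  loc1 : ∀ p ∈ S2.pairs, p.1 ∈ K1.simplices → p ∈ S1.pairs ∧ p.2 ∈ K1.simplices
  loc2 : ∀ p ∈ S2.pairs, p.2 ∈ K1.simplices → p ∈ S1.pairs ∧ p.1 ∈ K1.simplices

namespace Transfer

variable {K1 K2 : SimpComplex V} {S1 : Matching K1} {S2 : Matching K2}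
  (T : Transfer S1 S2)

include T

lemma crit_down {σ : Finset V} (hc : S2.Critical σ) : S1.Critical σ :=
  fun p hp => hc p (T.sub hp)

lemma crit_up {σ : Finset V} (hσ : σ ∈ K1.simplices) (hc : S1.Critical σ) :
    S2.Critical σ := by
  intro p hp
  constructor
  · intro h
    exact (hc p (T.loc1 p hp (h ▸ hσ)).1).1 h
  · intro h
    exact (hc p (T.loc2 p hp (h ▸ hσ)).1).2 h

lemma path_up {l : List (Finset V × Finset V)} (h : IsSigmaPath S1 l) :
    IsSigmaPath S2 l :=
  ⟨h.1, fun p hp => T.sub (h.2.1 p hp), h.2.2⟩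

lemma path : ∀ l : List (Finset V × Finset V), IsSigmaPath S2 l → ∀ hh : l ≠ [],
    (l.head hh).1 ∈ K1.simplices →
    IsSigmaPath S1 l ∧ (l.getLast hh).2 ∈ K1.simplices
  | [], h, hh, _ => absurd rfl hh
  | [p], h, hh, hp => by
      have hp2 : p ∈ S2.pairs := h.2.1 p (by simp)
      obtain ⟨h1, h2⟩ := T.loc1 p hp2 hp
      refine ⟨⟨hh, ?_, List.isChain_singleton p⟩, h2⟩
      intro r hr
      rw [List.mem_singleton] at hr
      exact hr ▸ h1
  | p :: q :: l, h, hh, hp => by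
      have hp2 : p ∈ S2.pairs := h.2.1 p (by simp)
      obtain ⟨h1, h2⟩ := T.loc1 p hp2 hp
      have hch := h.2.2
      rw [List.Chain', List.isChain_cons_cons] at hch
      have hq2 : q ∈ S2.pairs := h.2.1 q (by simp)
      have hq1K : q.1 ∈ K1.simplices :=
        K1.down_closed p.2 h2 q.1 (K2.nonempty_mem q.1 (S2.mem_fst q hq2)) hch.1.1
      have htail : IsSigmaPath S2 (q :: l) :=
        ⟨by simp, fun r hr => h.2.1 r (List.mem_cons_of_mem p hr), hch.2⟩
      obtain ⟨hpath, hlast⟩ := path (q :: l) htail (by simp) hq1K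
      refine ⟨⟨hh, ?_, ?_⟩, ?_⟩
      · intro r hr
        rcases List.mem_cons.mp hr with h' | h'
        · exact h' ▸ h1
        · exact hpath.2.1 r h'
      · rw [List.Chain', List.isChain_cons_cons]
        exact ⟨hch.1, hpath.2.2⟩
      · rw [List.getLast_cons (by simp : (q :: l) ≠ [])]
        exact hlast

variable (C : Cosheaf F V)

lemma head_nonempty {l : List (Finset V × Finset V)} (h : IsSigmaPath S2 l)
    (hh : l ≠ []) : (l.head hh).1.Nonempty :=
  K2.nonempty_mem _ (S2.mem_fst _ (h.2.1 _ (List.head_mem hh)))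

lemma block_eq (α ω : Finset V) (hα : α ∈ K1.simplices) :
    morseBlock C S1 α ω = morseBlock C S2 α ω := by
  unfold morseBlock
  congr 1
  apply Finset.sum_congr rfl
  intro ρ _
  by_cases h1 : IsSigmaPath S1 ρ.1
  · rw [dif_pos h1, dif_pos (T.path_up h1)]
  · rw [dif_neg h1]
    by_cases h2 : IsSigmaPath S2 ρ.1
    · rw [dif_pos h2]
      have hz : incidence F α (ρ.1.head h2.1).1 = 0 := by
        apply incidence_eq_zero
        rintro ⟨hs, hc⟩
        have hne := T.head_nonempty h2 h2.1
        have hmem := K1.down_closed α hα _ hne hs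
        exact h1 (T.path ρ.1 h2 h2.1 hmem).1
      rw [hz, mul_zero, zero_mul, zero_smul]
    · rw [dif_neg h2]

lemma block_zero (α ω : Finset V) (hα : α ∈ K1.simplices) (hω : ω.Nonempty)
    (hωn : ω ∉ K1.simplices) : morseBlock C S2 α ω = 0 := by
  unfold morseBlock
  have h0 : incidence F α ω = 0 :=
    incidence_eq_zero fun h => hωn (K1.down_closed α hα ω hω h.1)
  rw [h0, zero_smul, zero_add]
  apply Finset.sum_eq_zero
  intro ρ _
  by_cases h2 : IsSigmaPath S2 ρ.1
  · rw [dif_pos h2]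
    by_cases hhd : (ρ.1.head h2.1).1 ⊆ α ∧ α.card = (ρ.1.head h2.1).1.card + 1
    · have hmem := K1.down_closed α hα _ (T.head_nonempty h2 h2.1) hhd.1
      have hlast := (T.path ρ.1 h2 h2.1 hmem).2
      have hz : incidence F (ρ.1.getLast h2.1).2 ω = 0 :=
        incidence_eq_zero fun h => hωn (K1.down_closed _ hlast ω hω h.1)
      rw [hz, mul_zero, zero_smul]
    · rw [incidence_eq_zero hhd, mul_zero, zero_mul, zero_smul]
  · rw [dif_neg h2]

lemma mapIdx {k : ℕ} (σ : critIdx S1 k) :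
    (σ.1 ∈ K2.simplices ∧ σ.1.card = k + 1) ∧ S2.Critical σ.1 :=
  ⟨⟨T.ksub σ.2.1.1, σ.2.1.2⟩, T.crit_up σ.2.1.1 σ.2.2⟩

/-- The inclusion of Morse chains along a transfer. -/
noncomputable def incl (k : ℕ) : MorseChain C S1 k →ₗ[F] MorseChain C S2 k :=
  DirectSum.toModule F _ _ fun σ =>
    DirectSum.lof F (critIdx S2 k) (fun τ => C.stalk τ.1) ⟨σ.1, T.mapIdx σ⟩

/-- The projection of Morse chains along a transfer. -/
noncomputable def proj (k : ℕ) : MorseChain C S2 k →ₗ[F] MorseChain C S1 k :=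
  DirectSum.toModule F _ _ fun σ =>
    if hσ : σ.1 ∈ K1.simplices then
      DirectSum.lof F (critIdx S1 k) (fun τ => C.stalk τ.1)
        ⟨σ.1, ⟨⟨hσ, σ.2.1.2⟩, T.crit_down σ.2.2⟩⟩
    else 0

lemma incl_lof {k : ℕ} (σ : critIdx S1 k) (x : C.stalk σ.1) :
    T.incl C k (DirectSum.lof F (critIdx S1 k) (fun τ => C.stalk τ.1) σ x)
      = DirectSum.lof F (critIdx S2 k) (fun τ => C.stalk τ.1) ⟨σ.1, T.mapIdx σ⟩ x := by
  rw [incl, DirectSum.toModule_lof]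

lemma component_incl {k : ℕ} (a : MorseChain C S1 k) (ω : critIdx S2 k) :
    DirectSum.component F (critIdx S2 k) (fun τ => C.stalk τ.1) ω (T.incl C k a)
      = if h : (ω.1 ∈ K1.simplices ∧ ω.1.card = k + 1) ∧ S1.Critical ω.1
        then DirectSum.component F (critIdx S1 k) (fun τ => C.stalk τ.1) ⟨ω.1, h⟩ a
        else 0 := by
  induction a using DirectSum.induction_on with
  | zero => rw [map_zero]; split <;> simp
  | of σ x =>
      obtain ⟨s, hs⟩ := σ
      obtain ⟨w, hw⟩ := ω
      rw [← DirectSum.lof_eq_of F, incl_lof]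
      by_cases he : s = w
      · subst he
        have hmem : (s ∈ K1.simplices ∧ s.card = k + 1) ∧ S1.Critical s := hs
        rw [dif_pos hmem]
        exact (DirectSum.component.lof_self
            (M := fun τ : critIdx S2 k => C.stalk τ.1) F ⟨s, hw⟩ x).trans
          (DirectSum.component.lof_self
            (M := fun τ : critIdx S1 k => C.stalk τ.1) F ⟨s, hmem⟩ x).symm
      · have h1 : (⟨s, T.mapIdx ⟨s, hs⟩⟩ : critIdx S2 k) ≠ ⟨w, hw⟩ :=
          fun h => he (congrArg Subtype.val h)
        rw [DirectSum.component.of, dif_neg h1]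
        split
        · next hmem =>
            have h2 : (⟨s, hs⟩ : critIdx S1 k) ≠ ⟨w, hmem⟩ :=
              fun h => he (congrArg Subtype.val h)
            rw [DirectSum.component.of, dif_neg h2]
        · rfl
  | add x y hx hy =>
      rw [map_add, map_add, hx, hy]
      split <;> simp

lemma component_proj {k : ℕ} (a : MorseChain C S2 k) (τ : critIdx S1 k) :
    DirectSum.component F (critIdx S1 k) (fun τ' => C.stalk τ'.1) τ (T.proj C k a)
      = DirectSum.component F (critIdx S2 k) (fun τ' => C.stalk τ'.1)
          ⟨τ.1, T.mapIdx τ⟩ a := by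
  induction a using DirectSum.induction_on with
  | zero => rw [map_zero, map_zero, map_zero]
  | of σ x =>
      obtain ⟨s, hs⟩ := σ
      obtain ⟨t, ht⟩ := τ
      rw [← DirectSum.lof_eq_of F, proj, DirectSum.toModule_lof]
      by_cases he : s = t
      · subst he
        rw [dif_pos ht.1.1]
        exact (DirectSum.component.lof_self
            (M := fun τ : critIdx S1 k => C.stalk τ.1) F ⟨s, ht⟩ x).trans
          (DirectSum.component.lof_self
            (M := fun τ : critIdx S2 k => C.stalk τ.1) F ⟨s, hs⟩ x).symm
      · have h2 : (⟨s, hs⟩ : critIdx S2 k) ≠ ⟨t, T.mapIdx ⟨t, ht⟩⟩ :=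
          fun h => he (congrArg Subtype.val h)
        by_cases hsK : s ∈ K1.simplices
        · have h1 : (⟨s, ⟨⟨hsK, hs.1.2⟩, T.crit_down hs.2⟩⟩ : critIdx S1 k) ≠ ⟨t, ht⟩ :=
            fun h => he (congrArg Subtype.val h)
          rw [dif_pos hsK, DirectSum.component.of, dif_neg h1,
            DirectSum.component.of, dif_neg h2]
        · rw [dif_neg hsK, LinearMap.zero_apply, map_zero,
            DirectSum.component.of, dif_neg h2]
  | add x y hx hy =>
      rw [map_add, map_add, map_add, hx, hy]

end Transfer

lemma component_morseBoundary {K : SimpComplex V} (C : Cosheaf F V) (S : Matching K)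
    (k : ℕ) (α : critIdx S (k + 1)) (ω : critIdx S k) (x : C.stalk α.1) :
    DirectSum.component F (critIdx S k) (fun τ => C.stalk τ.1) ω
        (morseBoundary C S k
          (DirectSum.lof F (critIdx S (k + 1)) (fun τ => C.stalk τ.1) α x))
      = morseBlock C S α.1 ω.1 x := by
  rw [morseBoundary, DirectSum.toModule_lof, LinearMap.sum_apply, map_sum]
  rw [Finset.sum_eq_single ω]
  · rw [LinearMap.comp_apply, DirectSum.component.lof_self]
  · intro ω' _ hne
    rw [LinearMap.comp_apply, DirectSum.component.of, dif_neg hne]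
  · intro h
    exact absurd (Finset.mem_univ ω) h

namespace Transfer

variable {K1 K2 : SimpComplex V} {S1 : Matching K1} {S2 : Matching K2}
  (T : Transfer S1 S2) (C : Cosheaf F V)

include T

lemma comm (k : ℕ) :
    (T.incl C k).comp (morseBoundary C S1 k)
      = (morseBoundary C S2 k).comp (T.incl C (k + 1)) := by
  apply DirectSum.linearMap_ext
  intro α
  apply LinearMap.ext
  intro x
  apply DirectSum.ext_component F
  intro ω
  simp only [LinearMap.comp_apply]
  rw [T.component_incl, T.incl_lof, component_morseBoundary]
  split
  · next h =>
      rw [component_morseBoundary]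
      exact congrFun (congrArg _ (T.block_eq C α.1 ω.1 α.2.1.1)) x
  · next h =>
      have hωn : ω.1 ∉ K1.simplices := fun hm => h ⟨⟨hm, ω.2.1.2⟩, T.crit_down ω.2.2⟩
      have hne : ω.1.Nonempty := Finset.card_pos.mp (by rw [ω.2.1.2]; omega)
      rw [T.block_zero C α.1 ω.1 α.2.1.1 hne hωn]
      rfl

lemma incl_injective (k : ℕ) : Function.Injective (T.incl C k) := by
  intro a b h
  apply DirectSum.ext_component F
  intro σ
  have h2 := congrArg
    (DirectSum.component F (critIdx S2 k) (fun τ => C.stalk τ.1) ⟨σ.1, T.mapIdx σ⟩) h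
  rw [T.component_incl, T.component_incl, dif_pos σ.2, dif_pos σ.2] at h2
  exact h2

end Transfer

end Aux


/-- (Morse Mayer–Vietoris short exact sequence.)  Let `K = L ∪ M`
with `I = L ∩ M`, `𝒞` a cosheaf on `K`, and `Σ` an acyclic partial matching
compatible with `𝒞` and with both subcomplexes `L` and `M`.  Then
`0 → M_•^I → M_•^L ⊕ M_•^M → M_•^K → 0`, with maps `ι^{I,L} ⊕ ι^{I,M}` and
`ι^{L,K} ⊕ (−ι^{M,K})` induced by inclusions of critical simplices, is a short
exact sequence of chain complexes. -/
theorem morse_mayerVietoris_ses {K L M I : SimpComplex V} (C : Cosheaf F V)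
    (S : Matching K) (hacyc : S.Acyclic) (hcomp : S.Compatible C)
    (hLK : L.Sub K) (hMK : M.Sub K) (hIL : I.Sub L) (hIM : I.Sub M)
    (hunion : K.simplices = L.simplices ∪ M.simplices)
    (hinter : I.simplices = L.simplices ∩ M.simplices)
    (hcompatL : ∀ p ∈ S.pairs, (p.1 ∈ L.simplices ↔ p.2 ∈ L.simplices))
    (hcompatM : ∀ p ∈ S.pairs, (p.1 ∈ M.simplices ↔ p.2 ∈ M.simplices)) :
    ∃ (p : ∀ k : ℕ, MorseChain C (S.restrict I) k →ₗ[F]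
          MorseChain C (S.restrict L) k × MorseChain C (S.restrict M) k)
      (q : ∀ k : ℕ, MorseChain C (S.restrict L) k × MorseChain C (S.restrict M) k →ₗ[F]
          MorseChain C S k),
      -- `p` is the pair of inclusions of critical summands
      (∀ (k : ℕ) (σ : critIdx (S.restrict I) k)
        (hL : σ.1 ∈ L.simplices) (hcL : (S.restrict L).Critical σ.1)
        (hM : σ.1 ∈ M.simplices) (hcM : (S.restrict M).Critical σ.1)
        (x : C.stalk σ.1),
          p k (DirectSum.lof F (critIdx (S.restrict I) k) (fun ω => C.stalk ω.1) σ x) =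
            (DirectSum.lof F (critIdx (S.restrict L) k) (fun ω => C.stalk ω.1)
              ⟨σ.1, ⟨⟨hL, σ.2.1.2⟩, hcL⟩⟩ x,
             DirectSum.lof F (critIdx (S.restrict M) k) (fun ω => C.stalk ω.1)
              ⟨σ.1, ⟨⟨hM, σ.2.1.2⟩, hcM⟩⟩ x)) ∧
      -- `q` is the difference of the two inclusions of critical summands
      (∀ (k : ℕ) (σ : critIdx (S.restrict L) k) (hc : S.Critical σ.1)
        (x : C.stalk σ.1),
          q k (DirectSum.lof F (critIdx (S.restrict L) k) (fun ω => C.stalk ω.1) σ x, 0) =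
            DirectSum.lof F (critIdx S k) (fun ω => C.stalk ω.1)
              ⟨σ.1, ⟨⟨hLK σ.2.1.1, σ.2.1.2⟩, hc⟩⟩ x) ∧
      (∀ (k : ℕ) (σ : critIdx (S.restrict M) k) (hc : S.Critical σ.1)
        (x : C.stalk σ.1),
          q k (0, DirectSum.lof F (critIdx (S.restrict M) k) (fun ω => C.stalk ω.1) σ x) =
            - DirectSum.lof F (critIdx S k) (fun ω => C.stalk ω.1)
              ⟨σ.1, ⟨⟨hMK σ.2.1.1, σ.2.1.2⟩, hc⟩⟩ x) ∧
      -- `p` and `q` are chain maps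
      (∀ k : ℕ, (p k).comp (morseBoundary C (S.restrict I) k) =
        ((morseBoundary C (S.restrict L) k).prodMap
          (morseBoundary C (S.restrict M) k)).comp (p (k + 1))) ∧
      (∀ k : ℕ, (q k).comp
          ((morseBoundary C (S.restrict L) k).prodMap (morseBoundary C (S.restrict M) k)) =
        (morseBoundary C S k).comp (q (k + 1))) ∧
      -- short exactness in every degree
      (∀ k : ℕ, Function.Injective (p k)) ∧
      (∀ k : ℕ, Function.Surjective (q k)) ∧
      (∀ k : ℕ, LinearMap.range (p k) = LinearMap.ker (q k)) := by
  classical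
  have memI : ∀ {σ : Finset V}, σ ∈ I.simplices ↔ σ ∈ L.simplices ∧ σ ∈ M.simplices := by
    intro σ; rw [hinter, Finset.mem_inter]
  have TA : Transfer (S.restrict L) S := by
    refine ⟨fun p hp => (Finset.mem_filter.mp hp).1, hLK, ?_, ?_⟩
    · intro p hp h1
      have h2 := (hcompatL p hp).mp h1
      exact ⟨mem_restrict_pairs.mpr ⟨hp, h1, h2⟩, h2⟩
    · intro p hp h2
      have h1 := (hcompatL p hp).mpr h2
      exact ⟨mem_restrict_pairs.mpr ⟨hp, h1, h2⟩, h1⟩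
  have TB : Transfer (S.restrict M) S := by
    refine ⟨fun p hp => (Finset.mem_filter.mp hp).1, hMK, ?_, ?_⟩
    · intro p hp h1
      have h2 := (hcompatM p hp).mp h1
      exact ⟨mem_restrict_pairs.mpr ⟨hp, h1, h2⟩, h2⟩
    · intro p hp h2
      have h1 := (hcompatM p hp).mpr h2
      exact ⟨mem_restrict_pairs.mpr ⟨hp, h1, h2⟩, h1⟩
  have TC : Transfer (S.restrict I) (S.restrict L) := by
    refine ⟨?_, hIL, ?_, ?_⟩
    · intro p hp
      obtain ⟨hp0, h1, h2⟩ := mem_restrict_pairs.mp hp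
      exact mem_restrict_pairs.mpr ⟨hp0, hIL h1, hIL h2⟩
    · intro p hp h1
      obtain ⟨hp0, hL1, hL2⟩ := mem_restrict_pairs.mp hp
      have hM2 : p.2 ∈ M.simplices := (hcompatM p hp0).mp (memI.mp h1).2
      have h2 : p.2 ∈ I.simplices := memI.mpr ⟨hL2, hM2⟩
      exact ⟨mem_restrict_pairs.mpr ⟨hp0, h1, h2⟩, h2⟩
    · intro p hp h2
      obtain ⟨hp0, hL1, hL2⟩ := mem_restrict_pairs.mp hp
      have hM1 : p.1 ∈ M.simplices := (hcompatM p hp0).mpr (memI.mp h2).2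
      have h1 : p.1 ∈ I.simplices := memI.mpr ⟨hL1, hM1⟩
      exact ⟨mem_restrict_pairs.mpr ⟨hp0, h1, h2⟩, h1⟩
  have TD : Transfer (S.restrict I) (S.restrict M) := by
    refine ⟨?_, hIM, ?_, ?_⟩
    · intro p hp
      obtain ⟨hp0, h1, h2⟩ := mem_restrict_pairs.mp hp
      exact mem_restrict_pairs.mpr ⟨hp0, hIM h1, hIM h2⟩
    · intro p hp h1
      obtain ⟨hp0, hM1, hM2⟩ := mem_restrict_pairs.mp hp
      have hL2 : p.2 ∈ L.simplices := (hcompatL p hp0).mp (memI.mp h1).1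
      have h2 : p.2 ∈ I.simplices := memI.mpr ⟨hL2, hM2⟩
      exact ⟨mem_restrict_pairs.mpr ⟨hp0, h1, h2⟩, h2⟩
    · intro p hp h2
      obtain ⟨hp0, hM1, hM2⟩ := mem_restrict_pairs.mp hp
      have hL1 : p.1 ∈ L.simplices := (hcompatL p hp0).mpr (memI.mp h2).1
      have h1 : p.1 ∈ I.simplices := memI.mpr ⟨hL1, hM1⟩
      exact ⟨mem_restrict_pairs.mpr ⟨hp0, h1, h2⟩, h1⟩
  refine ⟨fun k => (TC.incl C k).prod (TD.incl C k),
    fun k => (TA.incl C k).comp (LinearMap.fst F _ _)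
      - (TB.incl C k).comp (LinearMap.snd F _ _),
    ?_, ?_, ?_, ?_, ?_, ?_, ?_, ?_⟩
  -- p on generators
  · intro k σ hL hcL hM hcM x
    show (TC.incl C k _, TD.incl C k _) = _
    rw [TC.incl_lof, TD.incl_lof]
  -- q on (·, 0)
  · intro k σ hc x
    simp only [LinearMap.sub_apply, LinearMap.comp_apply, LinearMap.fst_apply,
      LinearMap.snd_apply, map_zero, sub_zero]
    rw [TA.incl_lof]
  -- q on (0, ·)
  · intro k σ hc x
    simp only [LinearMap.sub_apply, LinearMap.comp_apply, LinearMap.fst_apply,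
      LinearMap.snd_apply, map_zero, zero_sub]
    rw [TB.incl_lof]
  -- p chain map
  · intro k
    apply LinearMap.ext
    intro c
    have h1 := LinearMap.congr_fun (TC.comm C k) c
    have h2 := LinearMap.congr_fun (TD.comm C k) c
    simp only [LinearMap.comp_apply] at h1 h2 ⊢
    exact Prod.ext h1 h2
  -- q chain map
  · intro k
    apply LinearMap.ext
    intro c
    obtain ⟨a, b⟩ := c
    have h1 := LinearMap.congr_fun (TA.comm C k) a
    have h2 := LinearMap.congr_fun (TB.comm C k) b
    simp only [LinearMap.comp_apply] at h1 h2
    show TA.incl C k (morseBoundary C (S.restrict L) k a)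
        - TB.incl C k (morseBoundary C (S.restrict M) k b)
      = morseBoundary C S k (TA.incl C (k + 1) a - TB.incl C (k + 1) b)
    rw [map_sub, h1, h2]
  -- injectivity
  · intro k c c' h
    exact TC.incl_injective C k (congrArg Prod.fst h)
  -- surjectivity
  · intro k y
    induction y using DirectSum.induction_on with
    | zero => exact ⟨0, map_zero _⟩
    | of σ x =>
        have hσK : σ.1 ∈ L.simplices ∪ M.simplices := by
          rw [← hunion]; exact σ.2.1.1
        rcases Finset.mem_union.mp hσK with hσ | hσ
        · refine ⟨(DirectSum.lof F (critIdx (S.restrict L) k) (fun τ => C.stalk τ.1)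
            ⟨σ.1, ⟨⟨hσ, σ.2.1.2⟩, TA.crit_down σ.2.2⟩⟩ x, 0), ?_⟩
          simp only [LinearMap.sub_apply, LinearMap.comp_apply, LinearMap.fst_apply,
            LinearMap.snd_apply, map_zero, sub_zero]
          rw [TA.incl_lof]
          rfl
        · refine ⟨(0, -DirectSum.lof F (critIdx (S.restrict M) k) (fun τ => C.stalk τ.1)
            ⟨σ.1, ⟨⟨hσ, σ.2.1.2⟩, TB.crit_down σ.2.2⟩⟩ x), ?_⟩
          simp only [LinearMap.sub_apply, LinearMap.comp_apply, LinearMap.fst_apply,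
            LinearMap.snd_apply, map_zero, zero_sub, map_neg, neg_neg]
          rw [TB.incl_lof]
          rfl
    | add u v hu hv =>
        obtain ⟨cu, hcu⟩ := hu
        obtain ⟨cv, hcv⟩ := hv
        exact ⟨cu + cv, by rw [map_add, hcu, hcv]⟩
  -- range = ker
  · intro k
    apply le_antisymm
    · rintro z hz
      obtain ⟨c, rfl⟩ := hz
      rw [LinearMap.mem_ker]
      show TA.incl C k (TC.incl C k c) - TB.incl C k (TD.incl C k c) = 0
      rw [sub_eq_zero]
      have heq : (TA.incl C k).comp (TC.incl C k) = (TB.incl C k).comp (TD.incl C k) := by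
        apply DirectSum.linearMap_ext
        intro σ
        apply LinearMap.ext
        intro x
        simp only [LinearMap.comp_apply]
        rw [TC.incl_lof, TA.incl_lof, TD.incl_lof, TB.incl_lof]
      exact LinearMap.congr_fun heq c
    · rintro ⟨a, b⟩ hab
      rw [LinearMap.mem_ker] at hab
      have hq : TA.incl C k a = TB.incl C k b := by
        have : TA.incl C k a - TB.incl C k b = 0 := hab
        exact sub_eq_zero.mp this
      refine ⟨TC.proj C k a, ?_⟩
      have key : ∀ (σK : critIdx S k)
          (hcL : (σK.1 ∈ L.simplices ∧ σK.1.card = k + 1) ∧ (S.restrict L).Critical σK.1),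
          DirectSum.component F (critIdx (S.restrict L) k) (fun τ => C.stalk τ.1)
              ⟨σK.1, hcL⟩ a
            = if hcM : (σK.1 ∈ M.simplices ∧ σK.1.card = k + 1) ∧ (S.restrict M).Critical σK.1
              then DirectSum.component F (critIdx (S.restrict M) k) (fun τ => C.stalk τ.1)
                ⟨σK.1, hcM⟩ b
              else 0 := by
        intro σK hcL
        have h3 := congrArg
          (DirectSum.component F (critIdx S k) (fun τ => C.stalk τ.1) σK) hq
        rw [TA.component_incl, TB.component_incl, dif_pos hcL] at h3
        exact h3
      have keyM : ∀ (σK : critIdx S k)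
          (hcM : (σK.1 ∈ M.simplices ∧ σK.1.card = k + 1) ∧ (S.restrict M).Critical σK.1),
          (if hcL : (σK.1 ∈ L.simplices ∧ σK.1.card = k + 1) ∧ (S.restrict L).Critical σK.1
            then DirectSum.component F (critIdx (S.restrict L) k) (fun τ => C.stalk τ.1)
              ⟨σK.1, hcL⟩ a
            else 0)
            = DirectSum.component F (critIdx (S.restrict M) k) (fun τ => C.stalk τ.1)
                ⟨σK.1, hcM⟩ b := by
        intro σK hcM
        have h3 := congrArg
          (DirectSum.component F (critIdx S k) (fun τ => C.stalk τ.1) σK) hq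
        rw [TA.component_incl, TB.component_incl, dif_pos hcM] at h3
        exact h3
      refine Prod.ext ?_ ?_
      -- first component
      · show TC.incl C k (TC.proj C k a) = a
        apply DirectSum.ext_component F
        intro σ
        rw [TC.component_incl]
        by_cases hI : σ.1 ∈ I.simplices
        · have hcond : (σ.1 ∈ I.simplices ∧ σ.1.card = k + 1)
              ∧ (S.restrict I).Critical σ.1 := ⟨⟨hI, σ.2.1.2⟩, TC.crit_down σ.2.2⟩
          rw [dif_pos hcond, TC.component_proj]
        · rw [dif_neg fun hc => hI hc.1.1]
          have h4 := key ⟨σ.1, ⟨⟨hLK σ.2.1.1, σ.2.1.2⟩, TA.crit_up σ.2.1.1 σ.2.2⟩⟩ σ.2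
          rw [dif_neg (fun hc => hI (memI.mpr ⟨σ.2.1.1, hc.1.1⟩))] at h4
          exact h4.symm
      -- second component
      · show TD.incl C k (TC.proj C k a) = b
        apply DirectSum.ext_component F
        intro σ
        rw [TD.component_incl]
        by_cases hI : σ.1 ∈ I.simplices
        · have hcond : (σ.1 ∈ I.simplices ∧ σ.1.card = k + 1)
              ∧ (S.restrict I).Critical σ.1 := ⟨⟨hI, σ.2.1.2⟩, TD.crit_down σ.2.2⟩
          rw [dif_pos hcond, TC.component_proj]
          have h4 := keyM ⟨σ.1, ⟨⟨hMK σ.2.1.1, σ.2.1.2⟩, TB.crit_up σ.2.1.1 σ.2.2⟩⟩ σ.2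
          rw [dif_pos (show ((σ.1 ∈ L.simplices ∧ σ.1.card = k + 1)
            ∧ (S.restrict L).Critical σ.1) from
            ⟨⟨(memI.mp hI).1, σ.2.1.2⟩,
              TA.crit_down (TB.crit_up σ.2.1.1 σ.2.2)⟩)] at h4
          exact h4
        · rw [dif_neg fun hc => hI hc.1.1]
          have h4 := keyM ⟨σ.1, ⟨⟨hMK σ.2.1.1, σ.2.1.2⟩, TB.crit_up σ.2.1.1 σ.2.2⟩⟩ σ.2
          rw [dif_neg (fun hc => hI (memI.mpr ⟨hc.1.1, σ.2.1.1⟩))] at h4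
          exact h4

end
end

section
/- Let P be a finite poset and C: (P,≤)^op → Vect_F^fd. Define G(U) := colim over the diagram with objects C_q for q ∈ U and morphisms C_{q≥q'}: C_q → C_{q'} whenever q ≥ q' in U, for each Alexandrov-open U ⊆ P. Then for every open U, the diagram ⊕_{x,y∈U} G(U_x ∩ U_y) ⇉ ⊕_{p∈U} G(U_p) → G(U) is a coequalizer in Vect_F^fd; i.e., G satisfies the cosheaf condition for the covering of U by open stars. -/
open CategoryTheory TopologicalSpace Opposite

noncomputable section

/-- The Alexandrov topology on a poset `P`: the open sets are exactly the
up-closed (upper) sets. -/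
def alexandrov (P : Type*) [Preorder P] : TopologicalSpace P where
  IsOpen U := IsUpperSet U
  isOpen_univ := isUpperSet_univ
  isOpen_inter _ _ h1 h2 := h1.inter h2
  isOpen_sUnion _ h := isUpperSet_sUnion h

variable (P : Type) [PartialOrder P]

/-- We regard every poset as a topological space via the Alexandrov topology. -/
instance alexandrovSpace : TopologicalSpace P := alexandrov P

/-- The open star `U_p = {x : p ≤ x}` as an open set of the Alexandrov topology. -/
def openStar (p : P) : Opens P :=
  ⟨Set.Ici p, by exact isUpperSet_Ici p⟩

/-- The open-star inclusion functor `i : (P,≤)ᵒᵖ ⥤ Open(P_Alex)`, `p ↦ U_p`,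
sending each relation `p ≤ q` to the inclusion `U_q ⊆ U_p`. -/
def starFunctor : Pᵒᵖ ⥤ Opens P where
  obj X := openStar P X.unop
  map {X Y} f := homOfLE (fun x hx => le_trans (leOfHom f.unop) hx)
  map_id _ := rfl
  map_comp _ _ := rfl

end

open CategoryTheory.Limits

noncomputable section

variable (F : Type) [Field F] (P : Type) [Finite P] [PartialOrder P]

/-- Every open set of the Alexandrov topology on a poset is an upper set,
hence contains the open star of each of its points. -/
lemma openStar_le (U : Opens P) {p : P} (hp : p ∈ U) : openStar P p ≤ U :=
  fun _ hx => U.is_open' hx hp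

/-- Index of the pairwise-intersection summands for the cover of `U` by open stars. -/
abbrev pairIdx (U : Opens P) : Type := {z : P × P // z.1 ∈ U ∧ z.2 ∈ U}

/-- Index of the open-star summands for the cover of `U` by open stars. -/
abbrev starIdx (U : Opens P) : Type := {p : P // p ∈ U}

noncomputable instance (U : Opens P) : Fintype (pairIdx P U) := Fintype.ofFinite _
noncomputable instance (U : Opens P) : Fintype (starIdx P U) := Fintype.ofFinite _

variable (G : Opens P ⥤ ModuleCat F) (U : Opens P)

/-- `⊕_{x,y ∈ U} G(U_x ∩ U_y)`. -/
abbrev interSum : ModuleCat F :=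
  ⨁ fun z : pairIdx P U => G.obj (openStar P z.1.1 ⊓ openStar P z.1.2)

/-- `⊕_{p ∈ U} G(U_p)`. -/
abbrev starSum : ModuleCat F := ⨁ fun p : starIdx P U => G.obj (openStar P p.1)

/-- The first parallel map, induced by the inclusions `U_x ∩ U_y ⊆ U_x`. -/
def leftMap : interSum F P G U ⟶ starSum F P G U :=
  biproduct.desc fun z =>
    G.map (homOfLE inf_le_left) ≫ biproduct.ι (fun p : starIdx P U => G.obj (openStar P p.1)) ⟨z.1.1, z.2.1⟩

/-- The second parallel map, induced by the inclusions `U_x ∩ U_y ⊆ U_y`. -/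
def rightMap : interSum F P G U ⟶ starSum F P G U :=
  biproduct.desc fun z =>
    G.map (homOfLE inf_le_right) ≫ biproduct.ι (fun p : starIdx P U => G.obj (openStar P p.1)) ⟨z.1.2, z.2.2⟩

/-- The structure map `⊕_{p ∈ U} G(U_p) → G(U)`, induced by the inclusions `U_p ⊆ U`. -/
def sumToTotal : starSum F P G U ⟶ G.obj U :=
  biproduct.desc fun p => G.map (homOfLE (openStar_le P U p.2))


variable {F P G U} in
/-- Key compatibility: if `p ≤ q` (so `U_q ⊆ U_p`) with `p, q ∈ U`, and `t` coequalizes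
the two parallel maps, then the map induced by `U_q ⊆ U_p` is compatible with `t`. -/
lemma star_compat {T : ModuleCat F} (t : starSum F P G U ⟶ T)
    (ht : leftMap F P G U ≫ t = rightMap F P G U ≫ t)
    {p q : P} (hp : p ∈ U) (hq : q ∈ U) (h : openStar P q ≤ openStar P p) :
    G.map (homOfLE h) ≫ biproduct.ι (fun r : starIdx P U => G.obj (openStar P r.1)) ⟨p, hp⟩ ≫ t =
      biproduct.ι (fun r : starIdx P U => G.obj (openStar P r.1)) ⟨q, hq⟩ ≫ t := by
  have h1 : biproduct.ι (fun z : pairIdx P U => G.obj (openStar P z.1.1 ⊓ openStar P z.1.2))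
      ⟨(p, q), hp, hq⟩ ≫ leftMap F P G U ≫ t =
      biproduct.ι (fun z : pairIdx P U => G.obj (openStar P z.1.1 ⊓ openStar P z.1.2))
      ⟨(p, q), hp, hq⟩ ≫ rightMap F P G U ≫ t := by rw [ht]
  simp only [leftMap, rightMap, biproduct.ι_desc_assoc, Category.assoc] at h1
  have h2 := congrArg (fun f => G.map (homOfLE (le_inf h le_rfl :
      openStar P q ≤ openStar P p ⊓ openStar P q)) ≫ f) h1
  simpa only [← Category.assoc, ← G.map_comp, homOfLE_comp, homOfLE_refl,
    G.map_id, Category.id_comp] using h2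


/-- Let `P` be a finite poset and `C : (P,≤)ᵒᵖ ⥤ Vect_F^fd`, and
let `G` be the left Kan extension of `C` along the open-star inclusion, computed
pointwise by the colimit formula (`G(U) = colim_{q ∈ U} C(q)`, the colimit of the
diagram with objects `C_q`, `q ∈ U`, and morphisms `C_{q ≥ q'}`).  Then for every
Alexandrov-open `U`, the diagram
`⊕_{x,y∈U} G(U_x ∩ U_y) ⇉ ⊕_{p∈U} G(U_p) → G(U)` is a coequalizer:
`G` satisfies the cosheaf condition for the cover of `U` by open stars. -/
theorem cosheaf_condition_for_star_cover
    (C : Pᵒᵖ ⥤ ModuleCat F) (hCfd : ∀ p : Pᵒᵖ, FiniteDimensional F (C.obj p))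
    (hGfd : ∀ W : Opens P, FiniteDimensional F (G.obj W))
    (α : C ⟶ starFunctor P ⋙ G)
    (hG : (CategoryTheory.Functor.LeftExtension.mk G α).IsPointwiseLeftKanExtension) :
    leftMap F P G U ≫ sumToTotal F P G U = rightMap F P G U ≫ sumToTotal F P G U ∧
    ∀ (T : ModuleCat F) (t : starSum F P G U ⟶ T),
      leftMap F P G U ≫ t = rightMap F P G U ≫ t →
        ∃! u : G.obj U ⟶ T, sumToTotal F P G U ≫ u = t := by
  constructor
  · refine biproduct.hom_ext' _ _ fun z => ?_
    simp only [leftMap, rightMap, sumToTotal, biproduct.ι_desc_assoc, Category.assoc,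
      biproduct.ι_desc, ← G.map_comp]
    rfl
  · intro T t ht
    -- membership of costructured-arrow objects
    have memf : ∀ f : CostructuredArrow (starFunctor P) U, f.left.unop ∈ U := fun f =>
      (leOfHom f.hom) (le_refl f.left.unop)
    -- the cocone with point `T`
    let c : Cocone (CostructuredArrow.proj (starFunctor P) U ⋙ C) :=
      { pt := T
        ι :=
          { app := fun f => α.app f.left ≫
              biproduct.ι (fun r : starIdx P U => G.obj (openStar P r.1))
                ⟨f.left.unop, memf f⟩ ≫ t
            naturality := fun f f' φ => by
              dsimp
              rw [Category.comp_id]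
              have hφ : f'.left.unop ≤ f.left.unop := leOfHom φ.left.unop
              have hstar : openStar P f.left.unop ≤ openStar P f'.left.unop :=
                fun x hx => le_trans hφ hx
              have := α.naturality φ.left
              dsimp [starFunctor] at this
              erw [reassoc_of% this]
              congr 1
              exact star_compat t ht (memf f') (memf f) hstar } }
    refine ⟨(hG U).desc c, ?_, ?_⟩
    · refine biproduct.hom_ext' _ _ fun p => ?_
      simp only [sumToTotal, biproduct.ι_desc_assoc]
      -- use colimit property at `openStar P p.1`
      refine (hG (openStar P p.1)).hom_ext fun f => ?_
      have hf0 := (hG U).fac c (CostructuredArrow.mk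
        (f.hom ≫ homOfLE (openStar_le P U p.2)))
      erw [biproduct.ι_desc_assoc]
      change (α.app f.left ≫ G.map (f.hom ≫ homOfLE (openStar_le P U p.2))) ≫ (hG U).desc c =
        α.app f.left ≫ biproduct.ι (fun r : starIdx P U => G.obj (openStar P r.1)) ⟨f.left.unop, memf (CostructuredArrow.mk (f.hom ≫ homOfLE (openStar_le P U p.2)))⟩ ≫ t at hf0
      change (α.app f.left ≫ G.map f.hom) ≫ G.map (homOfLE (openStar_le P U p.2)) ≫ (hG U).desc c =
        (α.app f.left ≫ G.map f.hom) ≫ biproduct.ι (fun r : starIdx P U => G.obj (openStar P r.1)) p ≫ t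
      have hq : f.left.unop ∈ U :=
        memf (CostructuredArrow.mk (f.hom ≫ homOfLE (openStar_le P U p.2)))
      have hstar : openStar P f.left.unop ≤ openStar P p.1 := leOfHom f.hom
      have heq : f.hom = homOfLE hstar := rfl
      have key := star_compat t ht p.2 hq hstar
      erw [Category.assoc, ← G.map_comp_assoc, ← Category.assoc, hf0, heq]
      exact ((Category.assoc _ _ _).trans (congrArg (fun g => α.app f.left ≫ g) key)).symm
    · intro u' hu'
      refine (hG U).hom_ext fun f => ?_
      have hfac := (hG U).fac c f
      change (α.app f.left ≫ G.map f.hom) ≫ (hG U).desc c =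
        α.app f.left ≫ biproduct.ι (fun r : starIdx P U => G.obj (openStar P r.1)) ⟨f.left.unop, memf f⟩ ≫ t at hfac
      change (α.app f.left ≫ G.map f.hom) ≫ u' = (α.app f.left ≫ G.map f.hom) ≫ (hG U).desc c
      rw [hfac]
      have h1 : biproduct.ι (fun r : starIdx P U => G.obj (openStar P r.1))
          ⟨f.left.unop, memf f⟩ ≫ sumToTotal F P G U = G.map f.hom := by
        simp only [sumToTotal, biproduct.ι_desc]; rfl
      simp only [Category.assoc]
      erw [← reassoc_of% h1, hu']
      rfl


end
end
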